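/- arXiv:2502.08516 — 5 statements merged into one kernel-verified Lean document; each statement's English description precedes it below -/
import Mathlib

section
/- Let φ satisfy ‖∇ₓ²φ(τ,·)‖_∞ ≤ δ(1+τ)^{-5/2} for all τ ≥ 0, and let (X(s;t,x,v), V(s;t,x,v)) solve dX/ds = V, dV/ds = ∓∇ₓφ(s,X) with X(t)=x, V(t)=v. Then for all 0 ≤ s ≤ t, |∂X(s)/∂v + (t−s)·Id| + |∂V(s)/∂v − Id| ≤ Cδ(t−s), where Id is the 3×3 identity matrix and C is independent of t, s, x, v. -/
open Set intervalIntegral MeasureTheory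



lemma aux_ftc {h : ℝ → ℝ} (hc : Continuous h) (t y : ℝ) :
    HasDerivAt (fun s => ∫ u in s..t, h u) (-(h y)) y :=
  intervalIntegral.integral_hasDerivAt_left (hc.intervalIntegrable y t)
    (hc.stronglyMeasurable.stronglyMeasurableAtFilter) hc.continuousAt

lemma aux_double {q : ℝ → ℝ} (hq : Continuous q) (t s : ℝ) :
    (∫ u in s..t, ∫ r in u..t, q r) = (∫ u in s..t, u * q u) - s * ∫ u in s..t, q u := by
  set P : ℝ → ℝ := fun u => ∫ r in u..t, q r with hP
  have hPd : ∀ y, HasDerivAt P (-(q y)) y := fun y => aux_ftc hq t y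
  have hPc : Continuous P := continuous_iff_continuousAt.2 fun y => (hPd y).continuousAt
  have hqq : Continuous (fun u => u * q u) := continuous_id.mul hq
  set D : ℝ → ℝ := fun y => (∫ u in y..t, P u) - ((∫ u in y..t, u * q u) - y * P y) with hD
  have hDd : ∀ y, HasDerivAt D 0 y := by
    intro y
    have h1 : HasDerivAt (fun y => ∫ u in y..t, P u) (-(P y)) y := aux_ftc hPc t y
    have h2 : HasDerivAt (fun y => ∫ u in y..t, u * q u) (-(y * q y)) y := aux_ftc hqq t y
    have h3 : HasDerivAt (fun y => y * P y) (1 * P y + y * -(q y)) y :=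
      (hasDerivAt_id y).mul (hPd y)
    have := h1.sub (h2.sub h3)
    exact this.congr_deriv (by ring)
  have hconst : D s = D t := by
    apply is_const_of_deriv_eq_zero (f := D)
    · exact fun y => (hDd y).differentiableAt
    · exact fun y => (hDd y).deriv
  have hDt : D t = 0 := by
    simp [hD, hP, intervalIntegral.integral_same]
  have hDs : D s = 0 := hconst.trans hDt
  have : (∫ u in s..t, P u) - ((∫ u in s..t, u * q u) - s * P s) = 0 := hDs
  have hPs : P s = ∫ u in s..t, q u := rfl
  rw [hPs] at this
  linarith




lemma aux_gronwall {t : ℝ} (ht : 0 ≤ t) {W c : ℝ → ℝ} (hW : Continuous W) (hc : Continuous c)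
    (hc0 : ∀ u, 0 ≤ c u)
    (hWle : ∀ s ∈ Set.Icc 0 t, W s ≤ (t - s) + ∫ u in s..t, c u * W u)
    (hI : ∀ s ∈ Set.Icc 0 t, (∫ u in s..t, c u) ≤ 2) :
    ∀ s ∈ Set.Icc 0 t, W s ≤ Real.exp 2 * (t - s) := by
  set G : ℝ → ℝ := fun s => ∫ u in s..t, c u * W u with hG
  set J : ℝ → ℝ := fun s => ∫ u in s..t, c u with hJ
  have hGd : ∀ y, HasDerivAt G (-(c y * W y)) y := fun y => aux_ftc (hc.mul hW) t y
  have hJd : ∀ y, HasDerivAt J (-(c y)) y := fun y => aux_ftc hc t y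
  set Z : ℝ → ℝ := fun s => ((t - s) + G s) * Real.exp (-(J s)) + s with hZ
  have hZd : ∀ y, HasDerivAt Z
      ((-1 + -(c y * W y)) * Real.exp (-(J y)) +
        ((t - y) + G y) * (Real.exp (-(J y)) * c y) + 1) y := by
    intro y
    have h1 : HasDerivAt (fun s => (t - s) + G s) (-1 + -(c y * W y)) y :=
      ((hasDerivAt_id y).const_sub t).add (hGd y)
    have h2 : HasDerivAt (fun s => Real.exp (-(J s))) (Real.exp (-(J y)) * c y) y := by
      have := ((hJd y).neg).exp
      exact this.congr_deriv (by simp only [Pi.neg_apply, neg_neg])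
    exact (h1.mul h2).add (hasDerivAt_id y)
  have hJnonneg : ∀ y ∈ Set.Icc 0 t, 0 ≤ J y := by
    intro y hy
    exact intervalIntegral.integral_nonneg hy.2 (fun u _ => hc0 u)
  have hmono : MonotoneOn Z (Set.Icc 0 t) := by
    apply monotoneOn_of_deriv_nonneg (convex_Icc 0 t)
    · exact (continuous_iff_continuousAt.2 fun y => (hZd y).continuousAt).continuousOn
    · exact fun y _ => (hZd y).differentiableAt.differentiableWithinAt
    · intro y hy
      rw [interior_Icc] at hy
      rw [(hZd y).deriv]
      have hyI : y ∈ Set.Icc 0 t := ⟨hy.1.le, hy.2.le⟩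
      have hE1 : Real.exp (-(J y)) ≤ 1 := by
        rw [Real.exp_le_one_iff]
        linarith [hJnonneg y hyI]
      have hE0 : 0 < Real.exp (-(J y)) := Real.exp_pos _
      have hWy := hWle y hyI
      have hcy := hc0 y
      have key : 0 ≤ ((t - y) + G y - W y) * (c y) := mul_nonneg (by linarith) hcy
      nlinarith
  intro s hs
  have hZst : Z s ≤ Z t := hmono hs ⟨ht, le_refl t⟩ hs.2
  have hZt : Z t = t := by
    simp [hZ, hG, hJ, intervalIntegral.integral_same]
  rw [hZt] at hZst
  -- Z s = ((t-s)+G s) * exp (-(J s)) + s ≤ t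
  have h1 : ((t - s) + G s) * Real.exp (-(J s)) ≤ t - s := by
    have : ((t - s) + G s) * Real.exp (-(J s)) + s ≤ t := hZst
    linarith
  have hEpos : 0 < Real.exp (-(J s)) := Real.exp_pos _
  have h2 : (t - s) + G s ≤ (t - s) * Real.exp (J s) := by
    have := mul_le_mul_of_nonneg_right h1 (le_of_lt (Real.exp_pos (J s)))
    rw [mul_assoc, ← Real.exp_add] at this
    simpa using this
  have h3 : Real.exp (J s) ≤ Real.exp 2 := Real.exp_le_exp.2 (hI s hs)
  have h4 : (t - s) * Real.exp (J s) ≤ (t - s) * Real.exp 2 := by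
    apply mul_le_mul_of_nonneg_left h3 (by linarith [hs.2])
  have := hWle s hs
  nlinarith



lemma aux_intc3 {δ s t : ℝ} (hδ : 0 < δ) (hs : 0 ≤ s) (hst : s ≤ t) :
    (∫ u in s..t, δ * (1 + max u 0) ^ (-(3:ℝ)/2)) ≤ 2 * δ := by
  have hcongr : (∫ u in s..t, δ * (1 + max u 0) ^ (-(3:ℝ)/2))
      = ∫ u in s..t, δ * (1 + u) ^ (-(3:ℝ)/2) := by
    apply intervalIntegral.integral_congr
    intro u hu
    rw [Set.uIcc_of_le hst] at hu
    have : max u 0 = u := max_eq_left (le_trans hs hu.1)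
    simp only [this]
  rw [hcongr]
  set Φ : ℝ → ℝ := fun u => (-2 * δ) * (1 + u) ^ (-(1:ℝ)/2) with hΦ
  have hΦd : ∀ u ∈ Set.uIcc s t, HasDerivAt Φ (δ * (1 + u) ^ (-(3:ℝ)/2)) u := by
    intro u hu
    rw [Set.uIcc_of_le hst] at hu
    have hu0 : (0:ℝ) ≤ u := le_trans hs hu.1
    have hb : (0:ℝ) < 1 + u := by linarith
    have hinner : HasDerivAt (fun u : ℝ => 1 + u) 1 u := (hasDerivAt_id u).const_add 1
    have hrpow : HasDerivAt (fun x : ℝ => x ^ (-(1:ℝ)/2))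
        ((-(1:ℝ)/2) * (1 + u) ^ (-(1:ℝ)/2 - 1)) (1 + u) :=
      Real.hasDerivAt_rpow_const (Or.inl (ne_of_gt hb))
    have hcomp := (hrpow.comp u hinner)
    have := hcomp.const_mul (-2 * δ)
    have he : (-(1:ℝ)/2 - 1) = (-(3:ℝ)/2) := by norm_num
    exact this.congr_deriv (by rw [he]; ring)
  have hint : (∫ u in s..t, δ * (1 + u) ^ (-(3:ℝ)/2)) = Φ t - Φ s := by
    apply intervalIntegral.integral_eq_sub_of_hasDerivAt hΦd
    apply ContinuousOn.intervalIntegrable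
    apply ContinuousOn.mul continuousOn_const
    apply ContinuousOn.rpow_const
    · exact (continuous_const.add continuous_id).continuousOn
    · intro u hu
      rw [Set.uIcc_of_le hst] at hu
      have hu0 : (0:ℝ) ≤ u := le_trans hs hu.1
      exact Or.inl (by positivity)
  rw [hint, hΦ]
  have h1 : (1 + s) ^ (-(1:ℝ)/2) ≤ 1 :=
    Real.rpow_le_one_of_one_le_of_nonpos (by linarith) (by norm_num)
  have h2 : (0:ℝ) ≤ (1 + t) ^ (-(1:ℝ)/2) := Real.rpow_nonneg (by linarith) _
  have h3 : (0:ℝ) ≤ (1 + s) ^ (-(1:ℝ)/2) := Real.rpow_nonneg (by linarith) _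
  simp only []
  nlinarith



set_option maxHeartbeats 2000000 in
/-- Velocity-Jacobian estimate for backward characteristics (Bardos–Degond):
if `‖∇ₓ²φ(τ)‖_∞ ≤ δ(1+τ)^{-5/2}` (here `E = ∇ₓφ` with `‖fderiv (E τ)‖ ≤ δ(1+τ)^{-5/2}`)
and `(X,V)` are backward characteristics with terminal data `X(t)=x`, `V(t)=v`, then the
velocity Jacobians `DXv = ∂X/∂v`, `DVv = ∂V/∂v` (solving the variational ODE with
terminal data `0` and `Id`) satisfy
`‖DXv(s) + (t-s)·Id‖ + ‖DVv(s) - Id‖ ≤ Cδ(t-s)` for all `0 ≤ s ≤ t`. -/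
theorem stmt5 :
    ∃ C > 0, ∀ (δ : ℝ), 0 < δ → δ ≤ 1 →
      ∀ (σ : ℝ), σ = 1 ∨ σ = -1 →
      ∀ (E : ℝ → EuclideanSpace ℝ (Fin 3) → EuclideanSpace ℝ (Fin 3)),
        (∀ τ, Differentiable ℝ (E τ)) →
        (∀ τ, 0 ≤ τ → ∀ y, ‖fderiv ℝ (E τ) y‖ ≤ δ / (1 + τ) ^ ((5 : ℝ) / 2)) →
        ∀ (t : ℝ) (x v : EuclideanSpace ℝ (Fin 3))
          (X V : ℝ → EuclideanSpace ℝ (Fin 3))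
          (DXv DVv : ℝ → EuclideanSpace ℝ (Fin 3) →L[ℝ] EuclideanSpace ℝ (Fin 3)),
          0 ≤ t →
          (∀ s ∈ Set.Icc (0 : ℝ) t, HasDerivAt X (V s) s) →
          (∀ s ∈ Set.Icc (0 : ℝ) t, HasDerivAt V (σ • E s (X s)) s) →
          X t = x → V t = v →
          (∀ s ∈ Set.Icc (0 : ℝ) t, HasDerivAt DXv (DVv s) s) →
          (∀ s ∈ Set.Icc (0 : ℝ) t,
            HasDerivAt DVv (σ • ((fderiv ℝ (E s) (X s)).comp (DXv s))) s) →
          DXv t = 0 →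
          DVv t = ContinuousLinearMap.id ℝ (EuclideanSpace ℝ (Fin 3)) →
          ∀ s ∈ Set.Icc (0 : ℝ) t,
            ‖DXv s + (t - s) • ContinuousLinearMap.id ℝ (EuclideanSpace ℝ (Fin 3))‖ +
              ‖DVv s - ContinuousLinearMap.id ℝ (EuclideanSpace ℝ (Fin 3))‖
              ≤ C * δ * (t - s) := by
  refine ⟨4 * Real.exp 2, by positivity, ?_⟩
  intro δ hδ hδ1 σ hσ E hEdiff hE t x v X V DXv DVv ht hX hV hXt hVt hDXv hDVv hDXvt hDVvt
  set idE := ContinuousLinearMap.id ℝ (EuclideanSpace ℝ (Fin 3)) with hidE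
  -- basic continuity facts
  have hDXvc : ∀ u ∈ Set.Icc (0:ℝ) t, ContinuousAt DXv u := fun u hu => (hDXv u hu).continuousAt
  have hDVvc : ∀ u ∈ Set.Icc (0:ℝ) t, ContinuousAt DVv u := fun u hu => (hDVv u hu).continuousAt
  have hDXvcon : ContinuousOn DXv (Set.Icc 0 t) := fun u hu => (hDXvc u hu).continuousWithinAt
  have hDVvcon : ContinuousOn DVv (Set.Icc 0 t) := fun u hu => (hDVvc u hu).continuousWithinAt
  -- clamp
  set clamp : ℝ → ℝ := fun u => max 0 (min u t) with hclampdef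
  have hclamp_mem : ∀ u, clamp u ∈ Set.Icc (0:ℝ) t := by
    intro u
    constructor
    · exact le_max_left _ _
    · exact max_le ht (min_le_right _ _)
  have hclamp_eq : ∀ u ∈ Set.Icc (0:ℝ) t, clamp u = u := by
    intro u hu
    simp only [hclampdef]
    rw [min_eq_left hu.2, max_eq_right hu.1]
  have hclamp_cont : Continuous clamp := continuous_const.max (continuous_id.min continuous_const)
  -- W
  set W : ℝ → ℝ := fun u => ‖DXv (clamp u)‖ with hWdef
  have hWcont : Continuous W := (hDXvcon.comp_continuous hclamp_cont hclamp_mem).norm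
  have hW0 : ∀ u, 0 ≤ W u := fun u => norm_nonneg _
  have hWeq : ∀ u ∈ Set.Icc (0:ℝ) t, W u = ‖DXv u‖ := by
    intro u hu; simp only [hWdef]; rw [hclamp_eq u hu]
  -- c5, c3
  set c5 : ℝ → ℝ := fun u => δ * (1 + max u 0) ^ (-(5:ℝ)/2) with hc5def
  set c3 : ℝ → ℝ := fun u => δ * (1 + max u 0) ^ (-(3:ℝ)/2) with hc3def
  have hbase_cont : Continuous (fun u : ℝ => 1 + max u 0) :=
    continuous_const.add (continuous_id.max continuous_const)
  have hbase_pos : ∀ u : ℝ, 0 < 1 + max u 0 := by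
    intro u; have := le_max_right u 0; linarith
  have hbase_ge1 : ∀ u : ℝ, 1 ≤ 1 + max u 0 := by
    intro u; have := le_max_right u 0; linarith
  have hc5cont : Continuous c5 :=
    continuous_const.mul (hbase_cont.rpow_const (fun u => Or.inl (ne_of_gt (hbase_pos u))))
  have hc3cont : Continuous c3 :=
    continuous_const.mul (hbase_cont.rpow_const (fun u => Or.inl (ne_of_gt (hbase_pos u))))
  have hc50 : ∀ u, 0 ≤ c5 u := fun u =>
    mul_nonneg hδ.le (Real.rpow_nonneg (hbase_pos u).le _)
  have hc30 : ∀ u, 0 ≤ c3 u := fun u =>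
    mul_nonneg hδ.le (Real.rpow_nonneg (hbase_pos u).le _)
  have hc53 : ∀ u, c5 u ≤ c3 u := by
    intro u
    apply mul_le_mul_of_nonneg_left _ hδ.le
    exact Real.rpow_le_rpow_of_exponent_le (hbase_ge1 u) (by norm_num)
  -- key kernel estimate : (u - s') * c5 u ≤ c3 u for 0 ≤ s' ≤ u
  have hkey : ∀ u : ℝ, 0 ≤ u → ∀ s' : ℝ, 0 ≤ s' → s' ≤ u → (u - s') * c5 u ≤ c3 u := by
    intro u hu0 s' hs0 hsu
    have hmax : max u 0 = u := max_eq_left hu0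
    have hb : (0:ℝ) < 1 + u := by linarith
    simp only [hc5def, hc3def, hmax]
    have hsplit : (1 + u) ^ (-(5:ℝ)/2) = (1 + u)⁻¹ * (1 + u) ^ (-(3:ℝ)/2) := by
      rw [show (-(5:ℝ)/2) = (-1) + (-(3:ℝ)/2) by norm_num, Real.rpow_add hb,
        Real.rpow_neg_one]
    rw [hsplit]
    have hA : (0:ℝ) ≤ (1 + u) ^ (-(3:ℝ)/2) := Real.rpow_nonneg hb.le _
    have hinv : (0:ℝ) < (1 + u)⁻¹ := inv_pos.2 hb
    have h1 : (u - s') * (1 + u)⁻¹ ≤ 1 := by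
      have hub : u - s' ≤ 1 + u := by linarith
      calc (u - s') * (1 + u)⁻¹ ≤ (1 + u) * (1 + u)⁻¹ :=
            mul_le_mul_of_nonneg_right hub hinv.le
        _ = 1 := mul_inv_cancel₀ (ne_of_gt hb)
    calc (u - s') * (δ * ((1 + u)⁻¹ * (1 + u) ^ (-(3:ℝ)/2)))
        = ((u - s') * (1 + u)⁻¹) * (δ * (1 + u) ^ (-(3:ℝ)/2)) := by ring
      _ ≤ 1 * (δ * (1 + u) ^ (-(3:ℝ)/2)) :=
            mul_le_mul_of_nonneg_right h1 (mul_nonneg hδ.le hA)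
      _ = δ * (1 + u) ^ (-(3:ℝ)/2) := one_mul _
  have hc5F : ∀ u ∈ Set.Icc (0:ℝ) t, ‖fderiv ℝ (E u) (X u)‖ ≤ c5 u := by
    intro u hu
    have h := hE u hu.1 (X u)
    have hmax : max u 0 = u := max_eq_left hu.1
    have hb : (0:ℝ) < 1 + u := by linarith [hu.1]
    simp only [hc5def, hmax]
    rw [show (-(5:ℝ)/2) = -((5:ℝ)/2) by norm_num, Real.rpow_neg hb.le, ← div_eq_mul_inv]
    exact h
  have habs : |σ| = 1 := by rcases hσ with h | h <;> simp [h]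
  have hσnorm : ∀ T : EuclideanSpace ℝ (Fin 3) →L[ℝ] EuclideanSpace ℝ (Fin 3),
      ‖σ • T‖ = ‖T‖ := by
    intro T
    have := norm_smul σ T
    rw [this, Real.norm_eq_abs, habs, one_mul]
  set p : ℝ → ℝ := fun s => ∫ u in s..t, c5 u * W u with hpdef
  have hpd : ∀ y, HasDerivAt p (-(c5 y * W y)) y := fun y => aux_ftc (hc5cont.mul hWcont) t y
  have hpcont : Continuous p := continuous_iff_continuousAt.2 fun y => (hpd y).continuousAt
  -- key bound on the derivative of DVv
  have hgnorm : ∀ u ∈ Set.Icc (0:ℝ) t,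
      ‖σ • ((fderiv ℝ (E u) (X u)).comp (DXv u))‖ ≤ c5 u * W u := by
    intro u hu
    rw [hσnorm, hWeq u hu]
    exact le_trans (ContinuousLinearMap.opNorm_comp_le _ _)
      (mul_le_mul_of_nonneg_right (hc5F u hu) (norm_nonneg _))
  -- barrier argument: ‖DVv u - idE‖ ≤ p u on [0, t]
  have hDVvle : ∀ u ∈ Set.Icc (0:ℝ) t, ‖DVv u - idE‖ ≤ p u := by
    have hf : ContinuousOn (fun r => DVv (t - r) - idE) (Set.Icc 0 t) := by
      intro r hr
      have hmem : t - r ∈ Set.Icc (0:ℝ) t := ⟨by linarith [hr.2], by linarith [hr.1]⟩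
      exact (((hDVvc _ hmem).comp ((continuous_const.sub continuous_id).continuousAt)).sub
        continuousAt_const).continuousWithinAt
    have hf' : ∀ r ∈ Set.Ico (0:ℝ) t, HasDerivWithinAt (fun r => DVv (t - r) - idE)
        ((-1 : ℝ) • (σ • ((fderiv ℝ (E (t - r)) (X (t - r))).comp (DXv (t - r)))))
        (Set.Ici r) r := by
      intro r hr
      have hmem : t - r ∈ Set.Icc (0:ℝ) t := ⟨by linarith [hr.2], by linarith [hr.1]⟩
      have hinner : HasDerivAt (fun r : ℝ => t - r) (-1) r := (hasDerivAt_id r).const_sub t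
      have hcomp := (hDVv _ hmem).scomp r hinner
      exact (hcomp.sub_const idE).hasDerivWithinAt
    have ha : ‖(fun r => DVv (t - r) - idE) 0‖ ≤ (fun r => p (t - r)) 0 := by
      simp only [sub_zero, hDVvt, sub_self, norm_zero, hpdef, intervalIntegral.integral_same]
      exact le_refl 0
    have hB : ∀ r, HasDerivAt (fun r => p (t - r)) (c5 (t - r) * W (t - r)) r := by
      intro r
      have hinner : HasDerivAt (fun r : ℝ => t - r) (-1) r := (hasDerivAt_id r).const_sub t
      have := (hpd (t - r)).comp r hinner
      exact this.congr_deriv (by ring)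
    have bound : ∀ r ∈ Set.Ico (0:ℝ) t,
        ‖(-1 : ℝ) • (σ • ((fderiv ℝ (E (t - r)) (X (t - r))).comp (DXv (t - r))))‖
          ≤ c5 (t - r) * W (t - r) := by
      intro r hr
      have hmem : t - r ∈ Set.Icc (0:ℝ) t := ⟨by linarith [hr.2], by linarith [hr.1]⟩
      rw [norm_smul, norm_neg, norm_one, one_mul]
      exact hgnorm _ hmem
    have key := image_norm_le_of_norm_deriv_right_le_deriv_boundary hf hf' ha hB bound
    intro u hu
    have hru : t - u ∈ Set.Icc (0:ℝ) t := ⟨by linarith [hu.2], by linarith [hu.1]⟩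
    have := key hru
    simpa [sub_sub_cancel] using this
  -- integral representation of DXv
  have hintDXv : ∀ s ∈ Set.Icc (0:ℝ) t, (∫ u in s..t, DVv u) = -(DXv s) := by
    intro s hs
    have hsub : Set.uIcc s t ⊆ Set.Icc 0 t := by
      rw [Set.uIcc_of_le hs.2]; exact Set.Icc_subset_Icc hs.1 le_rfl
    have h := intervalIntegral.integral_eq_sub_of_hasDerivAt
      (f := DXv) (f' := DVv) (fun u hu => hDXv u (hsub hu))
      ((hDVvcon.mono hsub).intervalIntegrable)
    rw [h, hDXvt, zero_sub]
  have hWle1 : ∀ s ∈ Set.Icc (0:ℝ) t, W s ≤ (t - s) + ∫ u in s..t, p u := by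
    intro s hs
    have hsub : Set.Icc s t ⊆ Set.Icc 0 t := Set.Icc_subset_Icc hs.1 le_rfl
    have h1 : W s = ‖∫ u in s..t, DVv u‖ := by rw [hWeq s hs, hintDXv s hs, norm_neg]
    have h2 : ‖∫ u in s..t, DVv u‖ ≤ ∫ u in s..t, ‖DVv u‖ :=
      intervalIntegral.norm_integral_le_integral_norm hs.2
    have h3 : (∫ u in s..t, ‖DVv u‖) ≤ ∫ u in s..t, (1 + p u) := by
      apply intervalIntegral.integral_mono_on hs.2
      · apply ContinuousOn.intervalIntegrable
        rw [Set.uIcc_of_le hs.2]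
        exact (hDVvcon.mono hsub).norm
      · exact (continuous_const.add hpcont).intervalIntegrable _ _
      · intro u hu
        have huI := hsub hu
        calc ‖DVv u‖ = ‖(DVv u - idE) + idE‖ := by rw [sub_add_cancel]
          _ ≤ ‖DVv u - idE‖ + ‖idE‖ := norm_add_le _ _
          _ ≤ p u + 1 := add_le_add (hDVvle u huI) ContinuousLinearMap.norm_id_le
          _ = 1 + p u := by ring
    have h4 : (∫ u in s..t, (1 + p u)) = (t - s) + ∫ u in s..t, p u := by
      rw [intervalIntegral.integral_add intervalIntegrable_const
        (hpcont.intervalIntegrable _ _)]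
      simp
    rw [h1]
    rw [h4] at h3
    linarith
  have hf2le : ∀ s ∈ Set.Icc (0:ℝ) t, (∫ u in s..t, p u) ≤ ∫ u in s..t, c3 u * W u := by
    intro s hs
    have hq : Continuous (fun u => c5 u * W u) := hc5cont.mul hWcont
    have hpint : (∫ u in s..t, p u)
        = (∫ u in s..t, u * (c5 u * W u)) - s * ∫ u in s..t, (c5 u * W u) :=
      aux_double hq t s
    have hA : IntervalIntegrable (fun u => u * (c5 u * W u)) volume s t :=
      (continuous_id'.mul hq).intervalIntegrable _ _
    have hB : IntervalIntegrable (fun u => s * (c5 u * W u)) volume s t :=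
      (continuous_const.mul hq).intervalIntegrable _ _
    have h5 : (∫ u in s..t, (u * (c5 u * W u) - s * (c5 u * W u)))
        = (∫ u in s..t, u * (c5 u * W u)) - ∫ u in s..t, s * (c5 u * W u) :=
      intervalIntegral.integral_sub hA hB
    have h6 : (∫ u in s..t, s * (c5 u * W u)) = s * ∫ u in s..t, (c5 u * W u) :=
      intervalIntegral.integral_const_mul _ _
    have h7 : (∫ u in s..t, (u - s) * (c5 u * W u))
        = ∫ u in s..t, (u * (c5 u * W u) - s * (c5 u * W u)) :=
      intervalIntegral.integral_congr (fun u _ => by ring)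
    rw [hpint, ← h6, ← h5, ← h7]
    apply intervalIntegral.integral_mono_on hs.2
    · exact ((continuous_id.sub continuous_const).mul hq).intervalIntegrable _ _
    · exact (hc3cont.mul hWcont).intervalIntegrable _ _
    · intro u hu
      have hu0 : (0:ℝ) ≤ u := le_trans hs.1 hu.1
      have hk := hkey u hu0 s hs.1 hu.1
      calc (u - s) * (c5 u * W u) = ((u - s) * c5 u) * W u := by ring
        _ ≤ c3 u * W u := mul_le_mul_of_nonneg_right hk (hW0 u)
  have hWle : ∀ s ∈ Set.Icc (0:ℝ) t, W s ≤ (t - s) + ∫ u in s..t, c3 u * W u := by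
    intro s hs
    have := hf2le s hs
    have := hWle1 s hs
    linarith
  have hIc3' : ∀ s ∈ Set.Icc (0:ℝ) t, (∫ u in s..t, c3 u) ≤ 2 * δ := by
    intro s hs
    exact aux_intc3 hδ hs.1 hs.2
  have hIc3 : ∀ s ∈ Set.Icc (0:ℝ) t, (∫ u in s..t, c3 u) ≤ 2 := by
    intro s hs
    have := hIc3' s hs
    linarith
  have hWbound : ∀ s ∈ Set.Icc (0:ℝ) t, W s ≤ Real.exp 2 * (t - s) :=
    aux_gronwall ht hWcont hc3cont hc30 hWle hIc3
  -- final assembly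
  intro s hs
  set Ke := Real.exp 2 with hKe
  have hKe0 : (0:ℝ) < Ke := Real.exp_pos 2
  have hts : (0:ℝ) ≤ t - s := by linarith [hs.2]
  have hptw : ∀ u ∈ Set.Icc s t, c3 u * W u ≤ (Ke * (t - s)) * c3 u := by
    intro u hu
    have huI : u ∈ Set.Icc (0:ℝ) t := ⟨le_trans hs.1 hu.1, hu.2⟩
    have hWb : W u ≤ Ke * (t - u) := hWbound u huI
    have hWb2 : W u ≤ Ke * (t - s) := le_trans hWb (by nlinarith [hu.1])
    calc c3 u * W u ≤ c3 u * (Ke * (t - s)) :=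
          mul_le_mul_of_nonneg_left hWb2 (hc30 u)
      _ = (Ke * (t - s)) * c3 u := by ring
  have hint_c3W : (∫ u in s..t, c3 u * W u) ≤ Ke * (t - s) * (2 * δ) := by
    have h1 : (∫ u in s..t, c3 u * W u) ≤ ∫ u in s..t, (Ke * (t - s)) * c3 u :=
      intervalIntegral.integral_mono_on hs.2 ((hc3cont.mul hWcont).intervalIntegrable _ _)
        ((continuous_const.mul hc3cont).intervalIntegrable _ _) hptw
    have h2 : (∫ u in s..t, (Ke * (t - s)) * c3 u) = (Ke * (t - s)) * ∫ u in s..t, c3 u :=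
      intervalIntegral.integral_const_mul _ _
    have h3 := hIc3' s hs
    rw [h2] at h1
    have h4 : (Ke * (t - s)) * (∫ u in s..t, c3 u) ≤ (Ke * (t - s)) * (2 * δ) :=
      mul_le_mul_of_nonneg_left h3 (by positivity)
    linarith
  have hterm2 : ‖DVv s - idE‖ ≤ Ke * (t - s) * (2 * δ) := by
    refine le_trans (hDVvle s hs) (le_trans ?_ hint_c3W)
    apply intervalIntegral.integral_mono_on hs.2 ((hc5cont.mul hWcont).intervalIntegrable _ _)
      ((hc3cont.mul hWcont).intervalIntegrable _ _)
    intro u _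
    exact mul_le_mul_of_nonneg_right (hc53 u) (hW0 u)
  have hsub : Set.uIcc s t ⊆ Set.Icc 0 t := by
    rw [Set.uIcc_of_le hs.2]; exact Set.Icc_subset_Icc hs.1 le_rfl
  have hArep : (∫ u in s..t, (DVv u - idE)) = -(DXv s + (t - s) • idE) := by
    have hder : ∀ u ∈ Set.uIcc s t,
        HasDerivAt (fun r => DXv r + (t - r) • idE) (DVv u - idE) u := by
      intro u hu
      have h1 := hDXv u (hsub hu)
      have h2 : HasDerivAt (fun r : ℝ => (t - r) • idE) ((-1 : ℝ) • idE) u :=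
        ((hasDerivAt_id u).const_sub t).smul_const idE
      have h3 := h1.add h2
      exact h3.congr_deriv (by rw [sub_eq_add_neg]; congr 1; ext z; simp)
    have hint : IntervalIntegrable (fun u => DVv u - idE) volume s t :=
      ((hDVvcon.mono hsub).sub continuousOn_const).intervalIntegrable
    have h := intervalIntegral.integral_eq_sub_of_hasDerivAt hder hint
    have htt : DXv t + (t - t) • idE = 0 := by
      have hz : (0:ℝ) • idE = 0 := zero_smul ℝ idE
      rw [hDXvt, sub_self, hz, zero_add]
    rw [h, htt, zero_sub]
  have hterm1 : ‖DXv s + (t - s) • idE‖ ≤ Ke * (t - s) * (2 * δ) := by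
    have h1 : ‖DXv s + (t - s) • idE‖ = ‖∫ u in s..t, (DVv u - idE)‖ := by
      rw [hArep, norm_neg]
    have h2 : ‖∫ u in s..t, (DVv u - idE)‖ ≤ ∫ u in s..t, ‖DVv u - idE‖ :=
      intervalIntegral.norm_integral_le_integral_norm hs.2
    have h3 : (∫ u in s..t, ‖DVv u - idE‖) ≤ ∫ u in s..t, p u := by
      apply intervalIntegral.integral_mono_on hs.2
      · apply ContinuousOn.intervalIntegrable
        exact ((hDVvcon.mono hsub).sub continuousOn_const).norm
      · exact hpcont.intervalIntegrable _ _
      · intro u hu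
        exact hDVvle u ⟨le_trans hs.1 hu.1, hu.2⟩
    have h4 := hf2le s hs
    linarith [hint_c3W]
  calc ‖DXv s + (t - s) • idE‖ + ‖DVv s - idE‖
      ≤ Ke * (t - s) * (2 * δ) + Ke * (t - s) * (2 * δ) := add_le_add hterm1 hterm2
    _ = 4 * Ke * δ * (t - s) := by ring
end

section
/- Under the assumptions of the previous statement (‖∇ₓ²φ(τ)‖_∞ ≤ δ(1+τ)^{-5/2}), for all 0 ≤ s ≤ t one also has |∂X(s)/∂x − Id| + |∂V(s)/∂x| ≤ Cδ with C independent of t, s, x, v. -/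
set_option maxHeartbeats 1000000

open Set intervalIntegral Real

/-- Derivative of `z ↦ (1+t-z)^p` (real power) at `v < 1+t`. -/
lemma hasDerivAt_one_add_sub_rpow (t p : ℝ) {v : ℝ} (hv : v < 1 + t) :
    HasDerivAt (fun z : ℝ => (1 + t - z) ^ p) (p * (1 + t - v) ^ (p - 1) * (-1)) v := by
  have hb : (0 : ℝ) < 1 + t - v := by linarith
  have h1 : HasDerivAt (fun z : ℝ => 1 + t - z) (-1) v := by
    simpa using (hasDerivAt_id v).const_sub (1 + t)
  have h2 : HasDerivAt (fun y : ℝ => y ^ p) (p * (1 + t - v) ^ (p - 1)) (1 + t - v) :=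
    Real.hasDerivAt_rpow_const (Or.inl hb.ne')
  simpa [Function.comp_def] using h2.comp v h1

/-- `exp x - 1 ≤ x * exp x` for `0 ≤ x`. -/
lemma exp_sub_one_le_mul_exp {x : ℝ} (hx : 0 ≤ x) : Real.exp x - 1 ≤ x * Real.exp x := by
  have h := Real.add_one_le_exp (-x)
  rw [Real.exp_neg] at h
  have hp := Real.exp_pos x
  have h2 := mul_le_mul_of_nonneg_right h hp.le
  rw [inv_mul_cancel₀ hp.ne'] at h2
  nlinarith

/-- Space-Jacobian estimate for backward characteristics: under
`‖fderiv (E τ)‖ ≤ δ(1+τ)^{-5/2}`, the Jacobians `DXx = ∂X/∂x`, `DVx = ∂V/∂x`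
(solving the variational ODE with terminal data `Id` and `0`) satisfy
`‖DXx(s) - Id‖ + ‖DVx(s)‖ ≤ Cδ` for all `0 ≤ s ≤ t`. -/
theorem stmt6 :
    ∃ C > 0, ∀ (δ : ℝ), 0 < δ → δ ≤ 1 →
      ∀ (σ : ℝ), σ = 1 ∨ σ = -1 →
      ∀ (E : ℝ → EuclideanSpace ℝ (Fin 3) → EuclideanSpace ℝ (Fin 3)),
        (∀ τ, Differentiable ℝ (E τ)) →
        (∀ τ, 0 ≤ τ → ∀ y, ‖fderiv ℝ (E τ) y‖ ≤ δ / (1 + τ) ^ ((5 : ℝ) / 2)) →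
        ∀ (t : ℝ) (x v : EuclideanSpace ℝ (Fin 3))
          (X V : ℝ → EuclideanSpace ℝ (Fin 3))
          (DXx DVx : ℝ → EuclideanSpace ℝ (Fin 3) →L[ℝ] EuclideanSpace ℝ (Fin 3)),
          0 ≤ t →
          (∀ s ∈ Set.Icc (0 : ℝ) t, HasDerivAt X (V s) s) →
          (∀ s ∈ Set.Icc (0 : ℝ) t, HasDerivAt V (σ • E s (X s)) s) →
          X t = x → V t = v →
          (∀ s ∈ Set.Icc (0 : ℝ) t, HasDerivAt DXx (DVx s) s) →
          (∀ s ∈ Set.Icc (0 : ℝ) t,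
            HasDerivAt DVx (σ • ((fderiv ℝ (E s) (X s)).comp (DXx s))) s) →
          DXx t = ContinuousLinearMap.id ℝ (EuclideanSpace ℝ (Fin 3)) →
          DVx t = 0 →
          ∀ s ∈ Set.Icc (0 : ℝ) t,
            ‖DXx s - ContinuousLinearMap.id ℝ (EuclideanSpace ℝ (Fin 3))‖ + ‖DVx s‖
              ≤ C * δ := by
  refine ⟨2 * Real.exp (4 / 3), by positivity, ?_⟩
  intro δ hδ hδ1 σ hσ E hEdiff hE t x v X V DXx DVx ht hX' hV' hXt hVt hDXx' hDVx' hDXxt hDVxt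
  set Id3 := ContinuousLinearMap.id ℝ (EuclideanSpace ℝ (Fin 3)) with hId3
  have hσabs : |σ| = 1 := by rcases hσ with h | h <;> simp [h]
  -- clipping to [0,t]
  set clip : ℝ → ℝ := fun u => max 0 (min u t) with hclip
  have hclip_mem : ∀ u, clip u ∈ Icc (0 : ℝ) t := fun u =>
    ⟨le_max_left _ _, max_le ht (min_le_right _ _)⟩
  have hclip_eq : ∀ u ∈ Icc (0 : ℝ) t, clip u = u := by
    intro u hu
    simp [hclip, min_eq_left hu.2, max_eq_right hu.1]
  have hclip_cont : Continuous clip :=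
    continuous_const.max (continuous_id.min continuous_const)
  have hmem : ∀ u ∈ Icc (0 : ℝ) t, t - u ∈ Icc (0 : ℝ) t := by
    intro u hu; exact ⟨by linarith [hu.2], by linarith [hu.1]⟩
  -- w = ‖DVx (t - clip u)‖, continuous on all of ℝ
  set w : ℝ → ℝ := fun u => ‖DVx (t - clip u)‖ with hwdef
  have hw : Continuous w := by
    rw [continuous_iff_continuousAt]
    intro u
    have h1 : ContinuousAt (fun z => t - clip z) u :=
      (continuous_const.sub hclip_cont).continuousAt
    have h2 : ContinuousAt DVx (t - clip u) :=
      (hDVx' _ (hmem _ (hclip_mem u))).continuousAt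
    have h3 := ContinuousAt.comp (g := DVx) (f := fun z : ℝ => t - clip z) h2 h1
    exact h3.norm
  have hww : ∀ u ∈ Icc (0 : ℝ) t, w u = ‖DVx (t - u)‖ := by
    intro u hu; simp [hwdef, hclip_eq u hu]
  -- r u = ∫₀ᵘ w
  set r : ℝ → ℝ := fun u => ∫ z in (0 : ℝ)..u, w z with hrdef
  have hr' : ∀ u, HasDerivAt r (w u) u := fun u =>
    intervalIntegral.integral_hasDerivAt_right (hw.intervalIntegrable _ _)
      (hw.stronglyMeasurableAtFilter _ _) hw.continuousAt
  have hrmono : Monotone r :=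
    monotone_of_deriv_nonneg (fun u => (hr' u).differentiableAt)
      (fun u => by rw [(hr' u).deriv]; exact norm_nonneg _)
  have hr0 : r 0 = 0 := intervalIntegral.integral_same
  have hrnn : ∀ u, 0 ≤ u → 0 ≤ r u := by
    intro u hu; rw [← hr0]; exact hrmono hu
  -- derivative of u ↦ DXx (t - u)
  have hDX : ∀ u ∈ Icc (0 : ℝ) t,
      HasDerivAt (fun z => DXx (t - z)) (-DVx (t - u)) u := by
    intro u hu
    have h1 : HasDerivAt (fun z : ℝ => t - z) (-1) u := by
      simpa using (hasDerivAt_id u).const_sub t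
    have h2 := hDXx' (t - u) (hmem u hu)
    have h3 := h2.scomp (x := u) (h := fun z : ℝ => t - z) h1
    simpa [Function.comp_def] using h3
  -- derivative of u ↦ DVx (t - u)
  have hDV : ∀ u ∈ Icc (0 : ℝ) t,
      HasDerivAt (fun z => DVx (t - z))
        (-(σ • ((fderiv ℝ (E (t - u)) (X (t - u))).comp (DXx (t - u))))) u := by
    intro u hu
    have h1 : HasDerivAt (fun z : ℝ => t - z) (-1) u := by
      simpa using (hasDerivAt_id u).const_sub t
    have h2 := hDVx' (t - u) (hmem u hu)
    have h3 := h2.scomp (x := u) (h := fun z : ℝ => t - z) h1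
    simpa [Function.comp_def] using h3
  -- Step A : ‖DXx (t-u) - Id‖ ≤ r u on [0,t]
  have hA : ∀ u ∈ Icc (0 : ℝ) t, ‖DXx (t - u) - Id3‖ ≤ r u := by
    have key := image_norm_le_of_norm_deriv_right_le_deriv_boundary
      (f := fun u => DXx (t - u) - Id3) (f' := fun u => -DVx (t - u))
      (a := 0) (b := t) (B := r) (B' := w)
      (fun u hu => (((hDX u hu).sub_const _).continuousAt).continuousWithinAt)
      (fun u hu => ((hDX u (Ico_subset_Icc_self hu)).sub_const _).hasDerivWithinAt)
      (by simp [hDXxt, hr0])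
      (fun u => hr' u)
      (by
        intro u hu
        rw [norm_neg, hww u (Ico_subset_Icc_self hu)])
    exact fun u hu => key hu
  have hAnorm : ∀ u ∈ Icc (0 : ℝ) t, ‖DXx (t - u)‖ ≤ 1 + r u := by
    intro u hu
    have h1 := hA u hu
    have h2 : ‖DXx (t - u)‖ - ‖Id3‖ ≤ ‖DXx (t - u) - Id3‖ := norm_sub_norm_le _ _
    have h3 : ‖Id3‖ ≤ 1 := ContinuousLinearMap.norm_id_le
    -- careful: need ‖DXx‖ ≤ ‖DXx - Id‖ + ‖Id‖
    have h4 : ‖DXx (t - u)‖ ≤ ‖DXx (t - u) - Id3‖ + ‖Id3‖ := by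
      have := norm_add_le (DXx (t - u) - Id3) Id3
      simpa using this
    linarith
  -- bound on fderiv along the characteristic
  have hEnorm : ∀ u ∈ Icc (0 : ℝ) t,
      ‖fderiv ℝ (E (t - u)) (X (t - u))‖ ≤ δ * (1 + t - u) ^ (-((5 : ℝ) / 2)) := by
    intro u hu
    have h := hE (t - u) (hmem u hu).1 (X (t - u))
    have hb : (0 : ℝ) < 1 + (t - u) := by
      have := (hmem u hu).1; linarith
    rw [show (1 : ℝ) + (t - u) = 1 + t - u by ring] at h hb
    rw [Real.rpow_neg hb.le, ← div_eq_mul_inv]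
    exact h
  -- Φ : explicit primitive for step B
  set Φ : ℝ → ℝ := fun z =>
    (2 * δ / 3) * ((1 + t - z) ^ (-((3 : ℝ) / 2)) - (1 + t) ^ (-((3 : ℝ) / 2))) with hΦdef
  have hΦ' : ∀ z ≤ t, HasDerivAt Φ (δ * (1 + t - z) ^ (-((5 : ℝ) / 2))) z := by
    intro z hz
    have h := ((hasDerivAt_one_add_sub_rpow t (-((3 : ℝ) / 2))
      (v := z) (by linarith)).sub_const ((1 + t) ^ (-((3 : ℝ) / 2)))).const_mul (2 * δ / 3)
    have hexp : (-((3 : ℝ) / 2) - 1) = -((5 : ℝ) / 2) := by norm_num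
    rw [hexp] at h
    refine h.congr_deriv ?_
    ring
  have hΦ0 : Φ 0 = 0 := by simp [hΦdef]
  -- Step B : ‖DVx (t-u)‖ ≤ (1 + r u) * Φ u on [0,t]
  have hBstep : ∀ u ∈ Icc (0 : ℝ) t, ‖DVx (t - u)‖ ≤ (1 + r u) * Φ u := by
    intro u hu
    have hIcc : Icc (0 : ℝ) u ⊆ Icc (0 : ℝ) t := Icc_subset_Icc le_rfl hu.2
    have hru : (0 : ℝ) ≤ 1 + r u := by have := hrnn u hu.1; linarith
    have key := image_norm_le_of_norm_deriv_right_le_deriv_boundary'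
      (f := fun z => DVx (t - z))
      (f' := fun z => -(σ • ((fderiv ℝ (E (t - z)) (X (t - z))).comp (DXx (t - z)))))
      (a := 0) (b := u)
      (B := fun z => (1 + r u) * Φ z)
      (B' := fun z => (1 + r u) * (δ * (1 + t - z) ^ (-((5 : ℝ) / 2))))
      (fun z hz => ((hDV z (hIcc hz)).continuousAt).continuousWithinAt)
      (fun z hz => (hDV z (hIcc (Ico_subset_Icc_self hz))).hasDerivWithinAt)
      (by simp [hDVxt, hΦ0])
      (fun z hz =>
        (continuousAt_const.mul (hΦ' z (hz.2.trans hu.2)).continuousAt).continuousWithinAt)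
      (fun z hz => ((hΦ' z (hz.2.le.trans hu.2)).const_mul _).hasDerivWithinAt)
      ?_
    · exact key (right_mem_Icc.mpr hu.1)
    · intro z hz
      have hzIcc : z ∈ Icc (0 : ℝ) t := hIcc (Ico_subset_Icc_self hz)
      have hAle := hEnorm z hzIcc
      have hDle : ‖DXx (t - z)‖ ≤ 1 + r u := by
        have h1 := hAnorm z hzIcc
        have h2 : r z ≤ r u := hrmono hz.2.le
        linarith
      have hcomp : ‖(fderiv ℝ (E (t - z)) (X (t - z))).comp (DXx (t - z))‖
          ≤ ‖fderiv ℝ (E (t - z)) (X (t - z))‖ * ‖DXx (t - z)‖ :=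
        ContinuousLinearMap.opNorm_comp_le _ _
      have hbz : (0 : ℝ) < 1 + t - z := by
        have := hzIcc.2; linarith
      have hAnn : (0 : ℝ) ≤ δ * (1 + t - z) ^ (-((5 : ℝ) / 2)) :=
        mul_nonneg hδ.le (Real.rpow_nonneg hbz.le _)
      calc ‖-(σ • ((fderiv ℝ (E (t - z)) (X (t - z))).comp (DXx (t - z))))‖
          = ‖(fderiv ℝ (E (t - z)) (X (t - z))).comp (DXx (t - z))‖ := by
            rw [norm_neg]
            rcases hσ with h | h <;> simp [h, norm_smul]
        _ ≤ ‖fderiv ℝ (E (t - z)) (X (t - z))‖ * ‖DXx (t - z)‖ := hcomp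
        _ ≤ (δ * (1 + t - z) ^ (-((5 : ℝ) / 2))) * (1 + r u) := by
            exact mul_le_mul hAle hDle (norm_nonneg _) hAnn
        _ = (1 + r u) * (δ * (1 + t - z) ^ (-((5 : ℝ) / 2))) := by ring
  -- K : integrating factor exponent for step C
  set K : ℝ → ℝ := fun z =>
    (4 * δ / 3) * ((1 + t - z) ^ (-((1 : ℝ) / 2)) - (1 + t) ^ (-((1 : ℝ) / 2))) with hKdef
  have hK' : ∀ z ≤ t,
      HasDerivAt K ((2 * δ / 3) * (1 + t - z) ^ (-((3 : ℝ) / 2))) z := by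
    intro z hz
    have h := ((hasDerivAt_one_add_sub_rpow t (-((1 : ℝ) / 2))
      (v := z) (by linarith)).sub_const ((1 + t) ^ (-((1 : ℝ) / 2)))).const_mul (4 * δ / 3)
    have hexp : (-((1 : ℝ) / 2) - 1) = -((3 : ℝ) / 2) := by norm_num
    rw [hexp] at h
    refine h.congr_deriv ?_
    ring
  have hK0 : K 0 = 0 := by simp [hKdef]
  -- Step C with ε-margin
  have hCε : ∀ ε > (0 : ℝ), ∀ u ∈ Icc (0 : ℝ) t,
      1 + r u ≤ Real.exp (K u + ε * u) := by
    intro ε hε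
    have key := image_norm_le_of_norm_deriv_right_lt_deriv_boundary'
      (f := fun z => 1 + r z) (f' := w) (a := 0) (b := t)
      (B := fun z => Real.exp (K z + ε * z))
      (B' := fun z => ((2 * δ / 3) * (1 + t - z) ^ (-((3 : ℝ) / 2)) + ε)
        * Real.exp (K z + ε * z))
      (fun z _ => (((hr' z).const_add 1).continuousAt).continuousWithinAt)
      (fun z _ => ((hr' z).const_add 1).hasDerivWithinAt)
      (by simp [hr0, hK0])
      ?_ ?_ ?_
    · intro u hu
      have h := key hu
      have h2 : (1 : ℝ) + r u ≤ ‖1 + r u‖ := le_abs_self _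
      exact h2.trans h
    · intro z hz
      have hd : HasDerivAt (fun z => Real.exp (K z + ε * z))
          (((2 * δ / 3) * (1 + t - z) ^ (-((3 : ℝ) / 2)) + ε) * Real.exp (K z + ε * z)) z := by
        have h1 : HasDerivAt (fun z : ℝ => K z + ε * z)
            ((2 * δ / 3) * (1 + t - z) ^ (-((3 : ℝ) / 2)) + ε) z := by
          have h2 : HasDerivAt (fun z : ℝ => ε * z) ε z := by
            simpa using (hasDerivAt_id z).const_mul ε
          exact (hK' z hz.2).add h2
        simpa [mul_comm] using h1.exp
      exact hd.continuousAt.continuousWithinAt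
    · intro z hz
      have hd : HasDerivAt (fun z : ℝ => K z + ε * z)
          ((2 * δ / 3) * (1 + t - z) ^ (-((3 : ℝ) / 2)) + ε) z := by
        have h2 : HasDerivAt (fun z : ℝ => ε * z) ε z := by
          simpa using (hasDerivAt_id z).const_mul ε
        exact (hK' z hz.2.le).add h2
      have hd2 : HasDerivAt (fun z : ℝ => Real.exp (K z + ε * z))
          (((2 * δ / 3) * (1 + t - z) ^ (-((3 : ℝ) / 2)) + ε) * Real.exp (K z + ε * z)) z := by
        simpa [mul_comm] using hd.exp
      exact hd2.hasDerivWithinAt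
    · intro z hz hcontact
      have hzIcc : z ∈ Icc (0 : ℝ) t := Ico_subset_Icc_self hz
      have hrz : (0 : ℝ) ≤ r z := hrnn z hzIcc.1
      have hfz : ‖(1 : ℝ) + r z‖ = 1 + r z := abs_of_nonneg (by linarith)
      have hΦκ : Φ z ≤ (2 * δ / 3) * (1 + t - z) ^ (-((3 : ℝ) / 2)) := by
        have h1 : (0 : ℝ) ≤ (1 + t) ^ (-((3 : ℝ) / 2)) :=
          Real.rpow_nonneg (by linarith) _
        have h2 : (0 : ℝ) ≤ 2 * δ / 3 := by positivity
        rw [hΦdef]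
        nlinarith [Real.rpow_nonneg (show (0:ℝ) ≤ 1 + t - z by linarith [hzIcc.2]) (-((3:ℝ)/2))]
      have hwz : w z ≤ ((2 * δ / 3) * (1 + t - z) ^ (-((3 : ℝ) / 2))) * (1 + r z) := by
        rw [hww z hzIcc]
        calc ‖DVx (t - z)‖ ≤ (1 + r z) * Φ z := hBstep z hzIcc
          _ ≤ (1 + r z) * ((2 * δ / 3) * (1 + t - z) ^ (-((3 : ℝ) / 2))) :=
            mul_le_mul_of_nonneg_left hΦκ (by linarith)
          _ = ((2 * δ / 3) * (1 + t - z) ^ (-((3 : ℝ) / 2))) * (1 + r z) := by ring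
      have hBpos : (0 : ℝ) < Real.exp (K z + ε * z) := Real.exp_pos _
      have hcon : (1 : ℝ) + r z = Real.exp (K z + ε * z) := by
        rw [← hfz]; exact hcontact
      have hwnn : (0 : ℝ) ≤ w z := norm_nonneg _
      have hκnn : (0 : ℝ) ≤ (2 * δ / 3) * (1 + t - z) ^ (-((3 : ℝ) / 2)) :=
        mul_nonneg (by positivity) (Real.rpow_nonneg (by linarith [hzIcc.2]) _)
      have : ‖w z‖ = w z := abs_of_nonneg hwnn
      rw [this]
      calc w z ≤ ((2 * δ / 3) * (1 + t - z) ^ (-((3 : ℝ) / 2))) * (1 + r z) := hwz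
        _ = ((2 * δ / 3) * (1 + t - z) ^ (-((3 : ℝ) / 2))) * Real.exp (K z + ε * z) := by
            rw [hcon]
        _ < ((2 * δ / 3) * (1 + t - z) ^ (-((3 : ℝ) / 2)) + ε) * Real.exp (K z + ε * z) := by
            nlinarith
  -- remove ε
  have hC : ∀ u ∈ Icc (0 : ℝ) t, 1 + r u ≤ Real.exp (K u) := by
    intro u hu
    have hten : Filter.Tendsto (fun ε : ℝ => Real.exp (K u + ε * u)) (nhdsWithin 0 (Ioi 0))
        (nhds (Real.exp (K u))) := by
      have hc : Continuous fun ε : ℝ => Real.exp (K u + ε * u) := by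
        exact Real.continuous_exp.comp (continuous_const.add (continuous_id.mul continuous_const))
      have h0 := hc.tendsto 0
      simp only [zero_mul, add_zero] at h0
      exact h0.mono_left nhdsWithin_le_nhds
    refine ge_of_tendsto hten ?_
    filter_upwards [self_mem_nhdsWithin] with ε hε
    exact hCε ε hε u hu
  -- final assembly
  intro s hs
  set u := t - s with hudef
  have hu : u ∈ Icc (0 : ℝ) t := ⟨by simp [hudef]; linarith [hs.2], by simp [hudef]; linarith [hs.1]⟩
  have hts : t - u = s := by simp [hudef]
  have h1 : ‖DXx s - Id3‖ ≤ r u := by have := hA u hu; rwa [hts] at this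
  have h2 : ‖DVx s‖ ≤ (1 + r u) * Φ u := by have := hBstep u hu; rwa [hts] at this
  have h3 : 1 + r u ≤ Real.exp (K u) := hC u hu
  have hbase : (1 : ℝ) ≤ 1 + t - u := by linarith [hu.2]
  have hbase2 : (0 : ℝ) < 1 + t - u := by linarith
  -- 0 ≤ K u and K u ≤ 4δ/3
  have hKnn : 0 ≤ K u := by
    have hmono : (1 + t) ^ (-((1 : ℝ) / 2)) ≤ (1 + t - u) ^ (-((1 : ℝ) / 2)) :=
      Real.rpow_le_rpow_of_nonpos hbase2 (by linarith [hu.1]) (by norm_num)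
    have : (0 : ℝ) ≤ 4 * δ / 3 := by positivity
    rw [hKdef]
    nlinarith
  have hKle : K u ≤ 4 * δ / 3 := by
    have h4 : (1 + t - u) ^ (-((1 : ℝ) / 2)) ≤ 1 :=
      Real.rpow_le_one_of_one_le_of_nonpos hbase (by norm_num)
    have h5 : (0 : ℝ) ≤ (1 + t) ^ (-((1 : ℝ) / 2)) := Real.rpow_nonneg (by linarith) _
    have h6 : (0 : ℝ) ≤ 4 * δ / 3 := by positivity
    rw [hKdef]
    nlinarith
  have hKle3 : K u ≤ 4 / 3 := by linarith [hKle]; 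
  have hexpK : Real.exp (K u) ≤ Real.exp (4 / 3) := Real.exp_le_exp.mpr (by linarith)
  have hΦnn : 0 ≤ Φ u := by
    have hmono : (1 + t) ^ (-((3 : ℝ) / 2)) ≤ (1 + t - u) ^ (-((3 : ℝ) / 2)) :=
      Real.rpow_le_rpow_of_nonpos hbase2 (by linarith [hu.1]) (by norm_num)
    have : (0 : ℝ) ≤ 2 * δ / 3 := by positivity
    rw [hΦdef]
    nlinarith
  have hΦle : Φ u ≤ 2 * δ / 3 := by
    have h4 : (1 + t - u) ^ (-((3 : ℝ) / 2)) ≤ 1 :=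
      Real.rpow_le_one_of_one_le_of_nonpos hbase (by norm_num)
    have h5 : (0 : ℝ) ≤ (1 + t) ^ (-((3 : ℝ) / 2)) := Real.rpow_nonneg (by linarith) _
    have h6 : (0 : ℝ) ≤ 2 * δ / 3 := by positivity
    rw [hΦdef]
    nlinarith
  -- bound the pieces
  have hrle : r u ≤ (4 * δ / 3) * Real.exp (4 / 3) := by
    have h7 : r u ≤ Real.exp (K u) - 1 := by linarith
    have h8 := exp_sub_one_le_mul_exp hKnn
    have h9 : K u * Real.exp (K u) ≤ (4 * δ / 3) * Real.exp (4 / 3) := by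
      have := Real.exp_pos (K u)
      have h10 : (0 : ℝ) ≤ 4 * δ / 3 := by positivity
      exact mul_le_mul hKle hexpK this.le h10
    linarith
  have hVle : ‖DVx s‖ ≤ Real.exp (4 / 3) * (2 * δ / 3) := by
    have h7 : (1 + r u) * Φ u ≤ Real.exp (K u) * (2 * δ / 3) :=
      mul_le_mul h3 hΦle hΦnn (Real.exp_pos _).le
    have h8 : Real.exp (K u) * (2 * δ / 3) ≤ Real.exp (4 / 3) * (2 * δ / 3) :=
      mul_le_mul_of_nonneg_right hexpK (by positivity)
    linarith
  have := Real.exp_pos (4 / 3 : ℝ)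
  calc ‖DXx s - Id3‖ + ‖DVx s‖
      ≤ (4 * δ / 3) * Real.exp (4 / 3) + Real.exp (4 / 3) * (2 * δ / 3) := by
        linarith [h1.trans hrle]
    _ = 2 * Real.exp (4 / 3) * δ := by ring
end

section
/- Let f, g : ℝ³ → ℝ and define the loss collision operator Γ_loss(f,g)(v) := f(v) · ∫_{ℝ³}∫_{S²} B(v−u,θ) √(μ(u)) g(u) dω du with B(v−u,θ) = |v−u|^γ b(θ), 0 ≤ γ ≤ 1, b bounded. Then for β ≥ 0 and the weight w_β(t,v) = (1+|v|²)^{β/2} e^{σ₀|v|²/(1+t)} (0 < σ₀ ≤ 1/16), there holds |w_β(t,v) Γ_loss(f,g)(v)| ≤ C ν(v) |w_β(t,v) f(v)| · ‖w_β(t,·) g‖_∞^{1/2} · (∫_{ℝ³} |g(u)| du)^{1/2}, for all v ∈ ℝ³, where ν(v) ≅ (1+|v|)^γ. -/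
open MeasureTheory

private lemma gauss_int3 {c : ℝ} (hc : 0 < c) :
    Integrable (fun u : EuclideanSpace ℝ (Fin 3) => Real.exp (-(c * ‖u‖ ^ 2))) := by
  have h := (GaussianFourier.integrable_cexp_neg_mul_sq_norm_add
      (V := EuclideanSpace ℝ (Fin 3)) (b := (c : ℂ)) (by simpa using hc) 0 0).norm
  apply h.congr
  filter_upwards with v
  simp [Complex.norm_exp, ← Complex.ofReal_pow]

private lemma cs_step (h g : EuclideanSpace ℝ (Fin 3) → ℝ)
    (hh : MemLp h 2) (hg : MemLp g 2) (hhn : ∀ x, 0 ≤ h x) (hgn : ∀ x, 0 ≤ g x) :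
    ∫ x, h x * g x ≤ Real.sqrt (∫ x, h x ^ 2) * Real.sqrt (∫ x, g x ^ 2) := by
  have hpq : Real.HolderConjugate 2 2 := Real.HolderConjugate.two_two
  have h2 : (ENNReal.ofReal 2) = 2 := by norm_num
  have := integral_mul_le_Lp_mul_Lq_of_nonneg (μ := (volume : Measure (EuclideanSpace ℝ (Fin 3))))
    hpq (Filter.Eventually.of_forall hhn) (Filter.Eventually.of_forall hgn)
    (by rw [h2]; exact hh) (by rw [h2]; exact hg)
  calc ∫ x, h x * g x ≤ (∫ x, h x ^ (2:ℝ)) ^ ((1:ℝ)/2) * (∫ x, g x ^ (2:ℝ)) ^ ((1:ℝ)/2) := this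
    _ = Real.sqrt (∫ x, h x ^ 2) * Real.sqrt (∫ x, g x ^ 2) := by
        rw [Real.sqrt_eq_rpow, Real.sqrt_eq_rpow]
        norm_num [Real.rpow_two]

private lemma aux_pt (r : ℝ) (hr : 0 ≤ r) :
    ((1 + r) * Real.exp (-(r ^ 2 / 4))) ^ 2 ≤ 10 * Real.exp (-(1/4 * r ^ 2)) := by
  have h1 : ((1 + r) * Real.exp (-(r ^ 2 / 4))) ^ 2
      = (1 + r) ^ 2 * Real.exp (-(r ^ 2 / 4)) * Real.exp (-(1/4 * r ^ 2)) := by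
    have e1 : Real.exp (-(r ^ 2 / 4)) ^ 2
        = Real.exp (-(r ^ 2 / 4)) * Real.exp (-(1/4 * r ^ 2)) := by
      rw [sq, ← Real.exp_add, ← Real.exp_add]
      congr 1
      ring
    rw [mul_pow, e1, mul_assoc]
  have h2 : (1 + r) ^ 2 ≤ 2 + 2 * r ^ 2 := by nlinarith [sq_nonneg (1 - r)]
  have h3 : r ^ 2 * Real.exp (-(r ^ 2 / 4)) ≤ 4 := by
    have hx := Real.add_one_le_exp (r ^ 2 / 4)
    have he := Real.exp_pos (r ^ 2 / 4)
    rw [Real.exp_neg, mul_comm, inv_mul_eq_div, div_le_iff₀ he]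
    nlinarith
  have h4 : Real.exp (-(r ^ 2 / 4)) ≤ 1 := by
    rw [← Real.exp_zero]
    exact Real.exp_le_exp.mpr (by nlinarith)
  have h5 := Real.exp_pos (-(r ^ 2 / 4))
  have h6 := Real.exp_pos (-(1/4 * r ^ 2))
  rw [h1]
  nlinarith [mul_le_mul_of_nonneg_right h2 h5.le]

set_option maxHeartbeats 1000000 in
/-- Weighted estimate for the loss term (Lemma 2.12, first part):
for `Γ_loss(f,g)(v) = f(v)∫∫ B(v-u,θ)√μ(u) g(u) dω du` with hard cutoff kernel
`B = |v-u|^γ b(cos θ)`, `b` bounded, and weight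
`w_β(t,v) = (1+|v|²)^{β/2} e^{σ₀|v|²/(1+t)}` (`β ≥ 0`, `0 < σ₀ ≤ 1/16`),
`|w_β Γ_loss(f,g)(v)| ≤ C ν(v) |w_β f(v)| ‖w_β g‖_∞^{1/2} (∫|g|)^{1/2}`
with `ν(v) ≅ (1+|v|)^γ`. -/
theorem stmt10 (γ σ₀ β Cb : ℝ) (hγ0 : 0 ≤ γ) (hγ1 : γ ≤ 1)
    (hσ0 : 0 < σ₀) (hσ1 : σ₀ ≤ 1 / 16) (hβ : 0 ≤ β)
    (b : ℝ → ℝ) (hb : Measurable b) (hbd : ∀ r, |b r| ≤ Cb) :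
    ∃ C > 0, ∀ t : ℝ, 0 ≤ t →
      ∀ (f g : EuclideanSpace ℝ (Fin 3) → ℝ), Measurable g → Integrable g →
      ∀ M : ℝ, 0 ≤ M →
      (∀ u, |((1 + ‖u‖ ^ 2) ^ (β / 2) * Real.exp (σ₀ * ‖u‖ ^ 2 / (1 + t))) * g u| ≤ M) →
      ∀ v,
        |((1 + ‖v‖ ^ 2) ^ (β / 2) * Real.exp (σ₀ * ‖v‖ ^ 2 / (1 + t))) *
            (f v * ∫ u : EuclideanSpace ℝ (Fin 3),
              (∫ ω, ‖v - u‖ ^ γ *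
                  b ((inner ℝ (v - u) ((ω : EuclideanSpace ℝ (Fin 3))) : ℝ) / ‖v - u‖)
                ∂((volume : Measure (EuclideanSpace ℝ (Fin 3))).toSphere)) *
              (Real.sqrt ((2 * Real.pi) ^ (-(3 : ℝ) / 2) * Real.exp (-‖u‖ ^ 2 / 2)) * g u))|
          ≤ C * (1 + ‖v‖) ^ γ *
              |((1 + ‖v‖ ^ 2) ^ (β / 2) * Real.exp (σ₀ * ‖v‖ ^ 2 / (1 + t))) * f v| *
              Real.sqrt M * Real.sqrt (∫ u, |g u|) := by
  classical
  set S : ℝ := (((volume : Measure (EuclideanSpace ℝ (Fin 3))).toSphere) Set.univ).toReal with hSdef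
  have hS0 : 0 ≤ S := ENNReal.toReal_nonneg
  set Cb' : ℝ := max Cb 0 with hCbdef
  have hCb0 : 0 ≤ Cb' := le_max_right _ _
  have hbd' : ∀ r, |b r| ≤ Cb' := fun r => (hbd r).trans (le_max_left _ _)
  -- the Gaussian L² profile
  set h : EuclideanSpace ℝ (Fin 3) → ℝ := fun u => (1 + ‖u‖) * Real.exp (-(‖u‖ ^ 2 / 4)) with hhdef
  have hhn : ∀ u, 0 ≤ h u := fun u => by
    have := norm_nonneg u; positivity
  have hhc : Continuous h := by
    apply Continuous.mul
    · exact continuous_const.add continuous_norm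
    · exact Real.continuous_exp.comp (by fun_prop)
  have hKint : Integrable (fun u : EuclideanSpace ℝ (Fin 3) => h u ^ 2) := by
    refine Integrable.mono' ((gauss_int3 (c := 1/4) (by norm_num)).const_mul 10)
      ((hhc.pow 2).aestronglyMeasurable) ?_
    filter_upwards with u
    rw [Real.norm_eq_abs, abs_of_nonneg (by positivity)]
    exact aux_pt ‖u‖ (norm_nonneg u)
  have hh2 : MemLp h 2 (volume : Measure (EuclideanSpace ℝ (Fin 3))) :=
    (memLp_two_iff_integrable_sq hhc.aestronglyMeasurable).2 hKint
  set K : ℝ := ∫ u : EuclideanSpace ℝ (Fin 3), h u ^ 2 with hKdef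
  have hK0 : 0 ≤ K := integral_nonneg fun u => sq_nonneg _
  refine ⟨Cb' * S * Real.sqrt K + 1, by positivity, ?_⟩
  intro t ht f g hgm hgi M hM hMg v
  have h1t : (0:ℝ) < 1 + t := by linarith
  -- the weight is ≥ 1
  have hW1 : ∀ x : EuclideanSpace ℝ (Fin 3),
      1 ≤ (1 + ‖x‖ ^ 2) ^ (β / 2) * Real.exp (σ₀ * ‖x‖ ^ 2 / (1 + t)) := by
    intro x
    have h1 : (1:ℝ) ≤ (1 + ‖x‖ ^ 2) ^ (β / 2) :=
      Real.one_le_rpow (by nlinarith [sq_nonneg ‖x‖]) (by linarith)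
    have h2 : (1:ℝ) ≤ Real.exp (σ₀ * ‖x‖ ^ 2 / (1 + t)) :=
      Real.one_le_exp (by positivity)
    nlinarith
  have hgle : ∀ u, |g u| ≤ M := by
    intro u
    refine le_trans ?_ (hMg u)
    rw [abs_mul, abs_of_nonneg (le_trans zero_le_one (hW1 u))]
    exact le_mul_of_one_le_left (abs_nonneg _) (hW1 u)
  -- √|g| is in L²
  have hsg : MemLp (fun u => Real.sqrt |g u|) 2
      (volume : Measure (EuclideanSpace ℝ (Fin 3))) := by
    refine (memLp_two_iff_integrable_sq ?_).2 ?_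
    · exact (Real.continuous_sqrt.measurable.comp hgm.abs).aestronglyMeasurable
    · refine hgi.abs.congr ?_
      filter_upwards with u
      rw [Real.sq_sqrt (abs_nonneg _)]
  -- pointwise bound on the integrand
  have hF : ∀ u : EuclideanSpace ℝ (Fin 3),
      |(∫ ω, ‖v - u‖ ^ γ *
            b ((inner ℝ (v - u) ((ω : EuclideanSpace ℝ (Fin 3))) : ℝ) / ‖v - u‖)
          ∂((volume : Measure (EuclideanSpace ℝ (Fin 3))).toSphere)) *
        (Real.sqrt ((2 * Real.pi) ^ (-(3 : ℝ) / 2) * Real.exp (-‖u‖ ^ 2 / 2)) * g u)|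
      ≤ Cb' * S * (1 + ‖v‖) ^ γ * Real.sqrt M * (h u * Real.sqrt |g u|) := by
    intro u
    have hA : |∫ ω, ‖v - u‖ ^ γ *
          b ((inner ℝ (v - u) ((ω : EuclideanSpace ℝ (Fin 3))) : ℝ) / ‖v - u‖)
        ∂((volume : Measure (EuclideanSpace ℝ (Fin 3))).toSphere)| ≤ ‖v - u‖ ^ γ * Cb' * S := by
      calc |∫ ω, ‖v - u‖ ^ γ *
              b ((inner ℝ (v - u) ((ω : EuclideanSpace ℝ (Fin 3))) : ℝ) / ‖v - u‖)
            ∂((volume : Measure (EuclideanSpace ℝ (Fin 3))).toSphere)|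
          ≤ ∫ ω, ‖‖v - u‖ ^ γ *
              b ((inner ℝ (v - u) ((ω : EuclideanSpace ℝ (Fin 3))) : ℝ) / ‖v - u‖)‖
            ∂((volume : Measure (EuclideanSpace ℝ (Fin 3))).toSphere) := by
            rw [← Real.norm_eq_abs]
            exact norm_integral_le_integral_norm _
        _ ≤ ∫ _ω, ‖v - u‖ ^ γ * Cb'
            ∂((volume : Measure (EuclideanSpace ℝ (Fin 3))).toSphere) := by
            refine integral_mono_of_nonneg (Filter.Eventually.of_forall fun ω => norm_nonneg _)
              (integrable_const _) (Filter.Eventually.of_forall fun ω => ?_)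
            simp only [Real.norm_eq_abs, abs_mul,
              abs_of_nonneg (Real.rpow_nonneg (norm_nonneg (v - u)) γ)]
            exact mul_le_mul_of_nonneg_left (hbd' _) (Real.rpow_nonneg (norm_nonneg _) _)
        _ = ‖v - u‖ ^ γ * Cb' * S := by
            rw [integral_const, smul_eq_mul, measureReal_def, hSdef]; ring
    have hB : ‖v - u‖ ^ γ ≤ (1 + ‖v‖) ^ γ * (1 + ‖u‖) := by
      have h1 : ‖v - u‖ ≤ (1 + ‖v‖) * (1 + ‖u‖) := by
        have h2 := norm_sub_le v u
        nlinarith [norm_nonneg v, norm_nonneg u]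
      calc ‖v - u‖ ^ γ ≤ ((1 + ‖v‖) * (1 + ‖u‖)) ^ γ :=
            Real.rpow_le_rpow (norm_nonneg _) h1 hγ0
        _ = (1 + ‖v‖) ^ γ * (1 + ‖u‖) ^ γ :=
            Real.mul_rpow (by positivity) (by positivity)
        _ ≤ (1 + ‖v‖) ^ γ * (1 + ‖u‖) := by
            have h3 : (1 + ‖u‖) ^ γ ≤ (1 + ‖u‖) ^ (1:ℝ) :=
              Real.rpow_le_rpow_of_exponent_le (by linarith [norm_nonneg u]) hγ1
            rw [Real.rpow_one] at h3
            exact mul_le_mul_of_nonneg_left h3 (Real.rpow_nonneg (by positivity) _)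
    have hC : Real.sqrt ((2 * Real.pi) ^ (-(3 : ℝ) / 2) * Real.exp (-‖u‖ ^ 2 / 2))
        ≤ Real.exp (-(‖u‖ ^ 2 / 4)) := by
      have hc1 : (2 * Real.pi) ^ (-(3 : ℝ) / 2) ≤ 1 :=
        Real.rpow_le_one_of_one_le_of_nonpos (by nlinarith [Real.pi_gt_three]) (by norm_num)
      calc Real.sqrt ((2 * Real.pi) ^ (-(3 : ℝ) / 2) * Real.exp (-‖u‖ ^ 2 / 2))
          ≤ Real.sqrt (Real.exp (-‖u‖ ^ 2 / 2)) := by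
            refine Real.sqrt_le_sqrt ?_
            have := Real.exp_pos (-‖u‖ ^ 2 / 2)
            nlinarith
        _ = Real.exp (-(‖u‖ ^ 2 / 4)) := by
            rw [← Real.exp_half]
            congr 1
            ring
    have hsq : Real.sqrt |g u| ≤ Real.sqrt M := Real.sqrt_le_sqrt (hgle u)
    have hgu : |g u| = Real.sqrt |g u| * Real.sqrt |g u| :=
      (Real.mul_self_sqrt (abs_nonneg _)).symm
    calc |(∫ ω, ‖v - u‖ ^ γ *
              b ((inner ℝ (v - u) ((ω : EuclideanSpace ℝ (Fin 3))) : ℝ) / ‖v - u‖)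
            ∂((volume : Measure (EuclideanSpace ℝ (Fin 3))).toSphere)) *
          (Real.sqrt ((2 * Real.pi) ^ (-(3 : ℝ) / 2) * Real.exp (-‖u‖ ^ 2 / 2)) * g u)|
        = |∫ ω, ‖v - u‖ ^ γ *
              b ((inner ℝ (v - u) ((ω : EuclideanSpace ℝ (Fin 3))) : ℝ) / ‖v - u‖)
            ∂((volume : Measure (EuclideanSpace ℝ (Fin 3))).toSphere)| *
          (Real.sqrt ((2 * Real.pi) ^ (-(3 : ℝ) / 2) * Real.exp (-‖u‖ ^ 2 / 2)) *
            (Real.sqrt |g u| * Real.sqrt |g u|)) := by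
          rw [abs_mul, abs_mul, abs_of_nonneg (Real.sqrt_nonneg _), ← hgu]
      _ ≤ ((1 + ‖v‖) ^ γ * (1 + ‖u‖) * Cb' * S) *
          (Real.exp (-(‖u‖ ^ 2 / 4)) * (Real.sqrt |g u| * Real.sqrt M)) := by
          have hA' : |∫ ω, ‖v - u‖ ^ γ *
                b ((inner ℝ (v - u) ((ω : EuclideanSpace ℝ (Fin 3))) : ℝ) / ‖v - u‖)
              ∂((volume : Measure (EuclideanSpace ℝ (Fin 3))).toSphere)|
              ≤ (1 + ‖v‖) ^ γ * (1 + ‖u‖) * Cb' * S := by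
            refine hA.trans ?_
            exact mul_le_mul_of_nonneg_right (mul_le_mul_of_nonneg_right hB hCb0) hS0
          gcongr <;> first
            | exact hA'
            | exact hC
            | exact hsq
            | positivity
      _ = Cb' * S * (1 + ‖v‖) ^ γ * Real.sqrt M * (h u * Real.sqrt |g u|) := by
          rw [hhdef]; ring
  -- bound the outer integral
  have hIntBound : Integrable (fun u : EuclideanSpace ℝ (Fin 3) =>
      Cb' * S * (1 + ‖v‖) ^ γ * Real.sqrt M * (h u * Real.sqrt |g u|)) := by
    refine Integrable.const_mul ?_ _
    refine Integrable.mono' (((hKint.add hgi.abs).div_const 2))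
      ((hhc.aestronglyMeasurable.mul
        (Real.continuous_sqrt.measurable.comp hgm.abs).aestronglyMeasurable)) ?_
    filter_upwards with u
    simp only [Pi.add_apply]
    rw [Real.norm_eq_abs, abs_of_nonneg (mul_nonneg (hhn u) (Real.sqrt_nonneg _))]
    have hs := Real.sq_sqrt (abs_nonneg (g u))
    nlinarith [sq_nonneg (h u - Real.sqrt |g u|), Real.sqrt_nonneg |g u|, hhn u]
  have hCS : ∫ u, h u * Real.sqrt |g u| ≤ Real.sqrt K * Real.sqrt (∫ u, |g u|) := by
    have := cs_step h (fun u => Real.sqrt |g u|) hh2 hsg hhn (fun u => Real.sqrt_nonneg _)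
    refine this.trans ?_
    have heq : (∫ u, (Real.sqrt |g u|) ^ 2) = ∫ u, |g u| := by
      refine integral_congr_ae (Filter.Eventually.of_forall fun u => ?_)
      simp [Real.sq_sqrt (abs_nonneg (g u))]
    rw [heq, hKdef]
  have hI : |∫ u : EuclideanSpace ℝ (Fin 3),
        (∫ ω, ‖v - u‖ ^ γ *
            b ((inner ℝ (v - u) ((ω : EuclideanSpace ℝ (Fin 3))) : ℝ) / ‖v - u‖)
          ∂((volume : Measure (EuclideanSpace ℝ (Fin 3))).toSphere)) *
        (Real.sqrt ((2 * Real.pi) ^ (-(3 : ℝ) / 2) * Real.exp (-‖u‖ ^ 2 / 2)) * g u)|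
      ≤ Cb' * S * Real.sqrt K *
        ((1 + ‖v‖) ^ γ * (Real.sqrt M * Real.sqrt (∫ u, |g u|))) := by
    calc |∫ u : EuclideanSpace ℝ (Fin 3),
          (∫ ω, ‖v - u‖ ^ γ *
              b ((inner ℝ (v - u) ((ω : EuclideanSpace ℝ (Fin 3))) : ℝ) / ‖v - u‖)
            ∂((volume : Measure (EuclideanSpace ℝ (Fin 3))).toSphere)) *
          (Real.sqrt ((2 * Real.pi) ^ (-(3 : ℝ) / 2) * Real.exp (-‖u‖ ^ 2 / 2)) * g u)|
        ≤ ∫ u : EuclideanSpace ℝ (Fin 3),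
          ‖(∫ ω, ‖v - u‖ ^ γ *
              b ((inner ℝ (v - u) ((ω : EuclideanSpace ℝ (Fin 3))) : ℝ) / ‖v - u‖)
            ∂((volume : Measure (EuclideanSpace ℝ (Fin 3))).toSphere)) *
          (Real.sqrt ((2 * Real.pi) ^ (-(3 : ℝ) / 2) * Real.exp (-‖u‖ ^ 2 / 2)) * g u)‖ := by
          rw [← Real.norm_eq_abs]
          exact norm_integral_le_integral_norm _
      _ ≤ ∫ u : EuclideanSpace ℝ (Fin 3),
          Cb' * S * (1 + ‖v‖) ^ γ * Real.sqrt M * (h u * Real.sqrt |g u|) := by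
          refine integral_mono_of_nonneg (Filter.Eventually.of_forall fun u => norm_nonneg _)
            hIntBound (Filter.Eventually.of_forall fun u => ?_)
          simp only [Real.norm_eq_abs]
          exact hF u
      _ = Cb' * S * (1 + ‖v‖) ^ γ * Real.sqrt M * ∫ u, h u * Real.sqrt |g u| :=
          integral_const_mul _ _
      _ ≤ Cb' * S * (1 + ‖v‖) ^ γ * Real.sqrt M * (Real.sqrt K * Real.sqrt (∫ u, |g u|)) := by
          refine mul_le_mul_of_nonneg_left hCS ?_
          positivity
      _ = Cb' * S * Real.sqrt K *
          ((1 + ‖v‖) ^ γ * (Real.sqrt M * Real.sqrt (∫ u, |g u|))) := by ring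
  -- conclude
  have habs : |((1 + ‖v‖ ^ 2) ^ (β / 2) * Real.exp (σ₀ * ‖v‖ ^ 2 / (1 + t))) *
      (f v * ∫ u : EuclideanSpace ℝ (Fin 3),
        (∫ ω, ‖v - u‖ ^ γ *
            b ((inner ℝ (v - u) ((ω : EuclideanSpace ℝ (Fin 3))) : ℝ) / ‖v - u‖)
          ∂((volume : Measure (EuclideanSpace ℝ (Fin 3))).toSphere)) *
        (Real.sqrt ((2 * Real.pi) ^ (-(3 : ℝ) / 2) * Real.exp (-‖u‖ ^ 2 / 2)) * g u))|
      = |((1 + ‖v‖ ^ 2) ^ (β / 2) * Real.exp (σ₀ * ‖v‖ ^ 2 / (1 + t))) * f v| *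
        |∫ u : EuclideanSpace ℝ (Fin 3),
        (∫ ω, ‖v - u‖ ^ γ *
            b ((inner ℝ (v - u) ((ω : EuclideanSpace ℝ (Fin 3))) : ℝ) / ‖v - u‖)
          ∂((volume : Measure (EuclideanSpace ℝ (Fin 3))).toSphere)) *
        (Real.sqrt ((2 * Real.pi) ^ (-(3 : ℝ) / 2) * Real.exp (-‖u‖ ^ 2 / 2)) * g u)| := by
    rw [← abs_mul]
    congr 1
    ring
  rw [habs]
  have hX0 : 0 ≤ (1 + ‖v‖) ^ γ *
      (|((1 + ‖v‖ ^ 2) ^ (β / 2) * Real.exp (σ₀ * ‖v‖ ^ 2 / (1 + t))) * f v| *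
        (Real.sqrt M * Real.sqrt (∫ u, |g u|))) := by positivity
  calc |((1 + ‖v‖ ^ 2) ^ (β / 2) * Real.exp (σ₀ * ‖v‖ ^ 2 / (1 + t))) * f v| *
        |∫ u : EuclideanSpace ℝ (Fin 3),
        (∫ ω, ‖v - u‖ ^ γ *
            b ((inner ℝ (v - u) ((ω : EuclideanSpace ℝ (Fin 3))) : ℝ) / ‖v - u‖)
          ∂((volume : Measure (EuclideanSpace ℝ (Fin 3))).toSphere)) *
        (Real.sqrt ((2 * Real.pi) ^ (-(3 : ℝ) / 2) * Real.exp (-‖u‖ ^ 2 / 2)) * g u)|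
      ≤ |((1 + ‖v‖ ^ 2) ^ (β / 2) * Real.exp (σ₀ * ‖v‖ ^ 2 / (1 + t))) * f v| *
        (Cb' * S * Real.sqrt K *
          ((1 + ‖v‖) ^ γ * (Real.sqrt M * Real.sqrt (∫ u, |g u|)))) :=
        mul_le_mul_of_nonneg_left hI (abs_nonneg _)
    _ = (Cb' * S * Real.sqrt K) * ((1 + ‖v‖) ^ γ *
          (|((1 + ‖v‖ ^ 2) ^ (β / 2) * Real.exp (σ₀ * ‖v‖ ^ 2 / (1 + t))) * f v| *
            (Real.sqrt M * Real.sqrt (∫ u, |g u|)))) := by ring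
    _ ≤ (Cb' * S * Real.sqrt K + 1) * ((1 + ‖v‖) ^ γ *
          (|((1 + ‖v‖ ^ 2) ^ (β / 2) * Real.exp (σ₀ * ‖v‖ ^ 2 / (1 + t))) * f v| *
            (Real.sqrt M * Real.sqrt (∫ u, |g u|)))) :=
        mul_le_mul_of_nonneg_right (by linarith) hX0
    _ = (Cb' * S * Real.sqrt K + 1) * (1 + ‖v‖) ^ γ *
          |((1 + ‖v‖ ^ 2) ^ (β / 2) * Real.exp (σ₀ * ‖v‖ ^ 2 / (1 + t))) * f v| *
          Real.sqrt M * Real.sqrt (∫ u, |g u|) := by ring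
end

section
/- Let B : [0,T] → [0,∞) be continuous and satisfy the integral equation B(t) = A + K∫₀ᵗ B(s) ds + K∫₀ᵗ (1 + ln(1+B(s))) B(s) ds, where A ≥ 1 and K > 0. Then B(t) ≤ e^{-1}·((A+1)e)^{exp(2Kt)} − 1 for all t ∈ [0,T]. -/
/-- Nonlinear (logarithmic) Gronwall estimate: if the continuous nonnegative `B`
satisfies `B(t) = A + K∫₀ᵗ B + K∫₀ᵗ (1 + log(1+B))B` with `A ≥ 1`, `K > 0`, then
`B(t) ≤ e⁻¹((A+1)e)^{exp(2Kt)} - 1` on `[0,T]`. -/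
theorem stmt13 (T A K : ℝ) (hT : 0 ≤ T) (hA : 1 ≤ A) (hK : 0 < K)
    (B : ℝ → ℝ) (hBc : ContinuousOn B (Set.Icc 0 T))
    (hBnn : ∀ t ∈ Set.Icc (0 : ℝ) T, 0 ≤ B t)
    (hB : ∀ t ∈ Set.Icc (0 : ℝ) T,
      B t = A + K * (∫ s in (0 : ℝ)..t, B s) +
        K * ∫ s in (0 : ℝ)..t, (1 + Real.log (1 + B s)) * B s) :
    ∀ t ∈ Set.Icc (0 : ℝ) T,
      B t ≤ Real.exp (-1) * ((A + 1) * Real.exp 1) ^ Real.exp (2 * K * t) - 1 := by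
  have hA0 : (0 : ℝ) < A := lt_of_lt_of_le one_pos hA
  -- positivity of 1 + B
  have hpos : ∀ t ∈ Set.Icc (0 : ℝ) T, (0 : ℝ) < 1 + B t := fun t ht => by
    have := hBnn t ht; linarith
  -- the combined integrand
  set φ : ℝ → ℝ := fun s => K * B s + K * ((1 + Real.log (1 + B s)) * B s) with hφ
  have hφc : ContinuousOn φ (Set.Icc 0 T) := by
    have hlog : ContinuousOn (fun s => Real.log (1 + B s)) (Set.Icc 0 T) :=
      (continuousOn_const.add hBc).log (fun t ht => (hpos t ht).ne')
    exact (continuousOn_const.mul hBc).add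
      (continuousOn_const.mul ((continuousOn_const.add hlog).mul hBc))
  -- B equals A + ∫ φ on [0,T]
  have hBint : ∀ t ∈ Set.Icc (0 : ℝ) T, B t = A + ∫ s in (0 : ℝ)..t, φ s := by
    intro t ht
    have hsub : Set.uIcc (0 : ℝ) t ⊆ Set.Icc 0 T := by
      rw [Set.uIcc_of_le ht.1]
      exact Set.Icc_subset_Icc le_rfl ht.2
    have h1 : IntervalIntegrable B MeasureTheory.volume 0 t :=
      (hBc.mono hsub).intervalIntegrable
    have h2 : IntervalIntegrable (fun s => (1 + Real.log (1 + B s)) * B s)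
        MeasureTheory.volume 0 t := by
      refine ContinuousOn.intervalIntegrable ?_
      refine ContinuousOn.mul (continuousOn_const.add ?_) (hBc.mono hsub)
      exact ((continuousOn_const.add (hBc.mono hsub)).log
        (fun s hs => (hpos s (hsub hs)).ne'))
    rw [hB t ht]
    rw [hφ]
    rw [intervalIntegral.integral_add (h1.const_mul K) (h2.const_mul K),
      intervalIntegral.integral_const_mul, intervalIntegral.integral_const_mul]
    ring
  -- B 0 = A
  have hB0 : B 0 = A := by
    have := hBint 0 (Set.left_mem_Icc.2 hT)
    simpa using this
  -- derivative of B within Ici t for t ∈ Ico 0 T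
  have hBd : ∀ t ∈ Set.Ico (0 : ℝ) T, HasDerivWithinAt B (φ t) (Set.Ici t) t := by
    intro t ht
    have htT : Set.Icc (0 : ℝ) T ∈ nhdsWithin t (Set.Ici t) :=
      Icc_mem_nhdsGE_of_mem ht
    have hsub : Set.uIcc (0 : ℝ) t ⊆ Set.Icc 0 T := by
      rw [Set.uIcc_of_le ht.1]
      exact Set.Icc_subset_Icc le_rfl ht.2.le
    have hii : IntervalIntegrable φ MeasureTheory.volume 0 t :=
      (hφc.mono hsub).intervalIntegrable
    have htT' : Set.Icc (0 : ℝ) T ∈ nhdsWithin t (Set.Ioi t) :=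
      nhdsWithin_mono t Set.Ioi_subset_Ici_self htT
    have hmeas : StronglyMeasurableAtFilter φ (nhdsWithin t (Set.Ioi t)) :=
      ⟨Set.Icc 0 T, htT', hφc.aestronglyMeasurable measurableSet_Icc⟩
    have hcw : ContinuousWithinAt φ (Set.Ioi t) t :=
      ((hφc.continuousWithinAt ⟨ht.1, ht.2.le⟩).mono_of_mem_nhdsWithin htT).mono
        Set.Ioi_subset_Ici_self
    have hFTC : HasDerivWithinAt (fun u => ∫ s in (0 : ℝ)..u, φ s) (φ t)
        (Set.Ici t) t :=
      intervalIntegral.integral_hasDerivWithinAt_right hii hmeas hcw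
    have hFTC' : HasDerivWithinAt (fun u => A + ∫ s in (0 : ℝ)..u, φ s) (φ t)
        (Set.Ici t) t := hFTC.const_add A
    have hmem : Set.Icc (0 : ℝ) T ∩ Set.Ici t ∈ nhdsWithin t (Set.Ici t) :=
      Filter.inter_mem htT self_mem_nhdsWithin
    refine HasDerivWithinAt.mono_of_mem_nhdsWithin ?_ hmem
    refine (hFTC'.mono Set.inter_subset_right).congr_of_mem ?_
      ⟨⟨ht.1, ht.2.le⟩, Set.self_mem_Ici⟩
    intro u hu
    exact hBint u hu.1
  -- f = log (1 + B)
  set f : ℝ → ℝ := fun t => Real.log (1 + B t) with hf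
  have hfnn : ∀ t ∈ Set.Icc (0 : ℝ) T, 0 ≤ f t := fun t ht =>
    Real.log_nonneg (by have := hBnn t ht; linarith)
  have hfc : ContinuousOn f (Set.Icc 0 T) :=
    (continuousOn_const.add hBc).log (fun t ht => (hpos t ht).ne')
  set f' : ℝ → ℝ := fun t => (1 + B t)⁻¹ * φ t with hf'
  have hfd : ∀ t ∈ Set.Ico (0 : ℝ) T, HasDerivWithinAt f (f' t) (Set.Ici t) t := by
    intro t ht
    have h1B : HasDerivWithinAt (fun u => 1 + B u) (φ t) (Set.Ici t) t :=
      (hBd t ht).const_add 1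
    exact (Real.hasDerivAt_log (hpos t ⟨ht.1, ht.2.le⟩).ne').comp_hasDerivWithinAt t h1B
  set δ : ℝ := Real.log (1 + A) with hδ
  have hδ0 : 0 ≤ δ := Real.log_nonneg (by linarith)
  -- Gronwall
  have key : ∀ t ∈ Set.Icc (0 : ℝ) T, ‖f t‖ ≤ gronwallBound δ (2 * K) (2 * K) (t - 0) := by
    refine norm_le_gronwallBound_of_norm_deriv_right_le hfc hfd ?_ ?_
    · rw [Real.norm_of_nonneg (hfnn 0 (Set.left_mem_Icc.2 hT))]
      simp [hf, hB0, hδ]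
    · intro t ht
      have htI : t ∈ Set.Icc (0 : ℝ) T := ⟨ht.1, ht.2.le⟩
      have hb : 0 ≤ B t := hBnn t htI
      have hy : 0 ≤ f t := hfnn t htI
      have hφnn : 0 ≤ φ t := by
        have : 0 ≤ Real.log (1 + B t) := hy
        have h1 : 0 ≤ K * B t := mul_nonneg hK.le hb
        have h2 : 0 ≤ K * ((1 + Real.log (1 + B t)) * B t) :=
          mul_nonneg hK.le (mul_nonneg (by linarith) hb)
        simp only [hφ]; linarith
      have hf'nn : 0 ≤ f' t := mul_nonneg (inv_nonneg.2 (by linarith)) hφnn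
      rw [Real.norm_of_nonneg hf'nn, Real.norm_of_nonneg hy]
      rw [hf', inv_mul_le_iff₀ (hpos t htI)]
      have hyf : f t = Real.log (1 + B t) := rfl
      simp only [hφ, ← hyf]
      nlinarith [mul_nonneg (mul_nonneg hK.le hy) hb, mul_nonneg hK.le hy,
        mul_nonneg hK.le hb]
  intro t ht
  have hE : gronwallBound δ (2 * K) (2 * K) (t - 0) =
      (δ + 1) * Real.exp (2 * K * t) - 1 := by
    rw [gronwallBound_of_K_ne_0 (by positivity)]
    have : (2 * K) / (2 * K) = 1 := div_self (by positivity)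
    simp only [sub_zero]
    rw [this]
    ring
  have hft : f t ≤ (δ + 1) * Real.exp (2 * K * t) - 1 := by
    have := key t ht
    rwa [Real.norm_of_nonneg (hfnn t ht), hE] at this
  -- unfold RHS
  have hbase : (0 : ℝ) < (A + 1) * Real.exp 1 := by positivity
  have hrhs : Real.exp (-1) * ((A + 1) * Real.exp 1) ^ Real.exp (2 * K * t) =
      Real.exp ((δ + 1) * Real.exp (2 * K * t) - 1) := by
    rw [Real.rpow_def_of_pos hbase, Real.log_mul (by linarith) (Real.exp_ne_zero 1),
      Real.log_exp, ← Real.exp_add]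
    congr 1
    have : Real.log (A + 1) = δ := by rw [hδ, add_comm]
    rw [this]; ring
  have hBexp : 1 + B t = Real.exp (f t) := (Real.exp_log (hpos t ht)).symm
  have : 1 + B t ≤ Real.exp ((δ + 1) * Real.exp (2 * K * t) - 1) := by
    rw [hBexp]; exact Real.exp_le_exp.2 hft
  rw [hrhs]
  linarith
end

section
/- Suppose F : Ω × ℝ³ → [0,∞) (with Ω = 𝕋³) and μ(v) = (2π)^{-3/2}e^{-|v|²/2}, and define f via F = μ + √μ f and h = w f with a weight w(v) ≥ 1. Then for any N ≥ 1 and any measurable set A ⊂ {|u| ≤ 2N} × {|u'| ≤ 3N}, ∫∫_A |f(y,u')|² du' dy ≤ C_N (‖h‖_{L^∞} · E + E), where E := ∫_Ω∫_{ℝ³} [ |F−μ|²/(4μ) 1_{|F−μ|≤μ} + (1/4)|F−μ| 1_{|F−μ|≥μ} ] dv dy. -/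
open MeasureTheory

/-- The normalized global Maxwellian `μ(v) = (2π)^{-3/2} e^{-|v|²/2}`. -/
noncomputable def maxwellian (u : EuclideanSpace ℝ (Fin 3)) : ℝ :=
  (2 * Real.pi) ^ (-(3 : ℝ) / 2) * Real.exp (-‖u‖ ^ 2 / 2)

set_option maxHeartbeats 1000000

/-- Relative-entropy interpolation (Eq. (3.26)): with `F = μ + √μ f ≥ 0`,
`h = w f`, `w ≥ 1`, `‖h‖_∞ ≤ M`, for any measurable
`A ⊆ Ω × {|u'| ≤ 3N}` (Ω the fundamental cube of `𝕋³`),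
`∫∫_A |f(y,u')|² du' dy ≤ C_N(‖h‖_∞ E + E)` where `E` is the defect-entropy
quantity of Lemma 2.3. -/
theorem stmt18 (N : ℝ) (hN : 1 ≤ N) :
    ∃ C > 0,
      ∀ (F f : EuclideanSpace ℝ (Fin 3) → EuclideanSpace ℝ (Fin 3) → ℝ)
        (w : EuclideanSpace ℝ (Fin 3) → ℝ) (M : ℝ),
        (∀ y u, 0 ≤ F y u) →
        (∀ y u, F y u = maxwellian u + Real.sqrt (maxwellian u) * f y u) →
        (∀ u, 1 ≤ w u) →
        0 ≤ M →
        (∀ y u, |w u * f y u| ≤ M) →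
        ∀ A : Set (EuclideanSpace ℝ (Fin 3) × EuclideanSpace ℝ (Fin 3)),
          MeasurableSet A →
          A ⊆ ({x : EuclideanSpace ℝ (Fin 3) | ∀ i, |x i| ≤ 1 / 2} ×ˢ
                Metric.closedBall (0 : EuclideanSpace ℝ (Fin 3)) (3 * N)) →
          (∫⁻ p in A, ENNReal.ofReal ((f p.1 p.2) ^ 2)) ≤
            (ENNReal.ofReal (C * M) + ENNReal.ofReal C) *
              ∫⁻ p in ({x : EuclideanSpace ℝ (Fin 3) | ∀ i, |x i| ≤ 1 / 2} ×ˢ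
                  (Set.univ : Set (EuclideanSpace ℝ (Fin 3)))),
                ENNReal.ofReal
                  ((if |F p.1 p.2 - maxwellian p.2| ≤ maxwellian p.2 then
                      (F p.1 p.2 - maxwellian p.2) ^ 2 / (4 * maxwellian p.2) else 0) +
                   (if maxwellian p.2 ≤ |F p.1 p.2 - maxwellian p.2| then
                      |F p.1 p.2 - maxwellian p.2| / 4 else 0)) := by
  have hμpos : ∀ u, 0 < maxwellian u := by
    intro u; unfold maxwellian; positivity
  set c : ℝ := Real.sqrt ((2 * Real.pi) ^ (-(3 : ℝ) / 2) * Real.exp (-(3 * N) ^ 2 / 2))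
    with hcdef
  have hc0 : 0 < c := Real.sqrt_pos.mpr (by positivity)
  have hc1 : c ≤ 1 := by
    rw [hcdef, show (1 : ℝ) = Real.sqrt 1 from Real.sqrt_one.symm]
    apply Real.sqrt_le_sqrt
    have h1 : (2 * Real.pi) ^ (-(3 : ℝ) / 2) ≤ 1 :=
      Real.rpow_le_one_of_one_le_of_nonpos (by nlinarith [Real.pi_gt_three]) (by norm_num)
    have h2 : Real.exp (-(3 * N) ^ 2 / 2) ≤ 1 := by
      rw [Real.exp_le_one_iff]; nlinarith
    nlinarith [Real.exp_pos (-(3 * N) ^ 2 / 2),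
      Real.rpow_pos_of_pos (by positivity : (0:ℝ) < 2 * Real.pi) (-(3 : ℝ) / 2)]
  have hK0 : (0 : ℝ) < 4 / c := by positivity
  have hK4 : (4 : ℝ) ≤ 4 / c := by rw [le_div_iff₀ hc0]; nlinarith
  refine ⟨4 / c, hK0, ?_⟩
  intro F f w M hF0 hFeq hw hM hh A hA hAsub
  set Ω : Set (EuclideanSpace ℝ (Fin 3)) := {x | ∀ i, |x i| ≤ 1 / 2} with hΩdef
  have hΩ : MeasurableSet Ω := by
    have : Ω = ⋂ i, {x : EuclideanSpace ℝ (Fin 3) | |x i| ≤ 1 / 2} := by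
      ext x; simp [hΩdef, Set.mem_iInter]
    rw [this]
    refine MeasurableSet.iInter fun i => measurableSet_le ?_ measurable_const
    fun_prop
  set S : Set (EuclideanSpace ℝ (Fin 3) × EuclideanSpace ℝ (Fin 3)) := Ω ×ˢ Set.univ with hSdef
  have hS : MeasurableSet S := hΩ.prod MeasurableSet.univ
  set g : EuclideanSpace ℝ (Fin 3) × EuclideanSpace ℝ (Fin 3) → ℝ := fun p =>
    (if |F p.1 p.2 - maxwellian p.2| ≤ maxwellian p.2 then
        (F p.1 p.2 - maxwellian p.2) ^ 2 / (4 * maxwellian p.2) else 0) +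
    (if maxwellian p.2 ≤ |F p.1 p.2 - maxwellian p.2| then
        |F p.1 p.2 - maxwellian p.2| / 4 else 0) with hgdef
  have hg0 : ∀ p, 0 ≤ g p := by
    intro p
    have := hμpos p.2
    apply add_nonneg <;> [skip; skip] <;> split_ifs <;> positivity
  have key : ∀ p ∈ A, (f p.1 p.2) ^ 2 ≤ ((4 / c) * M + 4 / c) * g p := by
    intro p hp
    obtain ⟨hy, hu⟩ := hAsub hp
    have hunorm : ‖p.2‖ ≤ 3 * N := mem_closedBall_zero_iff.mp hu
    have hμ : 0 < maxwellian p.2 := hμpos p.2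
    set μv := maxwellian p.2
    set s := Real.sqrt μv with hsdef
    have hspos : 0 < s := Real.sqrt_pos.mpr hμ
    have hs2 : s ^ 2 = μv := Real.sq_sqrt hμ.le
    have hcs : c ≤ s := by
      rw [hcdef, hsdef]
      apply Real.sqrt_le_sqrt
      show (2 * Real.pi) ^ (-(3 : ℝ) / 2) * Real.exp (-(3 * N) ^ 2 / 2) ≤ maxwellian p.2
      unfold maxwellian
      apply mul_le_mul_of_nonneg_left _ (le_of_lt (by positivity))
      apply Real.exp_le_exp.mpr
      nlinarith [norm_nonneg p.2]
    have heq : s * f p.1 p.2 = F p.1 p.2 - μv := by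
      have := hFeq p.1 p.2; rw [hsdef]; linarith
    have hfM : |f p.1 p.2| ≤ M := by
      have h := hh p.1 p.2
      have hw1 := hw p.2
      rw [abs_mul, abs_of_pos (by linarith : (0:ℝ) < w p.2)] at h
      nlinarith [abs_nonneg (f p.1 p.2)]
    set d := F p.1 p.2 - μv with hddef
    have hf2 : (f p.1 p.2) ^ 2 = d ^ 2 / μv := by
      rw [← heq, mul_pow, hs2, mul_div_cancel_left₀ _ hμ.ne']
    by_cases h1 : |d| ≤ μv
    · have ht2 : 0 ≤ (if μv ≤ |d| then |d| / 4 else 0) := by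
        split_ifs <;> positivity
      have hgeq : g p = d ^ 2 / (4 * μv) + (if μv ≤ |d| then |d| / 4 else 0) := by
        rw [hgdef]
        show (if |d| ≤ μv then d ^ 2 / (4 * μv) else 0) + (if μv ≤ |d| then |d| / 4 else 0) = _
        simp only [if_pos h1]
      rw [hgeq]
      have ht1 : 0 ≤ d ^ 2 / (4 * μv) := by positivity
      have hfe : (f p.1 p.2) ^ 2 = 4 * (d ^ 2 / (4 * μv)) := by
        rw [hf2]; field_simp
      rw [hfe]
      have hKM : 0 ≤ (4 / c) * M := mul_nonneg hK0.le hM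
      nlinarith [mul_nonneg hKM ht1, mul_nonneg (add_nonneg hKM hK0.le) ht2,
        mul_nonneg (sub_nonneg.mpr hK4) ht1]
    · have h1' : μv ≤ |d| := (not_le.mp h1).le
      have hgeq : g p = 0 + |d| / 4 := by
        rw [hgdef]
        show (if |d| ≤ μv then d ^ 2 / (4 * μv) else 0) + (if μv ≤ |d| then |d| / 4 else 0) = _
        simp only [if_neg h1, if_pos h1']
      rw [hgeq]
      have e1 : (f p.1 p.2) ^ 2 ≤ M * |f p.1 p.2| := by
        nlinarith [sq_abs (f p.1 p.2), abs_nonneg (f p.1 p.2)]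
      have habs : s * |f p.1 p.2| = |d| := by
        rw [← heq, abs_mul, abs_of_pos hspos]
      have e2 : c * |f p.1 p.2| ≤ |d| := by
        rw [← habs]
        exact mul_le_mul_of_nonneg_right hcs (abs_nonneg _)
      have hrhs : ((4 / c) * M + 4 / c) * (0 + |d| / 4) = (M * |d| + |d|) / c := by
        field_simp; ring
      rw [hrhs, le_div_iff₀ hc0]
      have e3 : (f p.1 p.2) ^ 2 * c ≤ M * |f p.1 p.2| * c :=
        mul_le_mul_of_nonneg_right e1 hc0.le
      have e4 : M * (c * |f p.1 p.2|) ≤ M * |d| := mul_le_mul_of_nonneg_left e2 hM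
      nlinarith [abs_nonneg d]
  -- ENNReal bookkeeping
  set K : ENNReal := ENNReal.ofReal ((4 / c) * M) + ENNReal.ofReal (4 / c) with hKdef
  have hKne : K ≠ ⊤ := by
    rw [hKdef]; exact ENNReal.add_ne_top.mpr ⟨ENNReal.ofReal_ne_top, ENNReal.ofReal_ne_top⟩
  have hKM : 0 ≤ (4 / c) * M := mul_nonneg hK0.le hM
  calc ∫⁻ p in A, ENNReal.ofReal ((f p.1 p.2) ^ 2)
      = ∫⁻ p, A.indicator (fun q => ENNReal.ofReal ((f q.1 q.2) ^ 2)) p := by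
        rw [lintegral_indicator hA _]
    _ ≤ ∫⁻ p, K * S.indicator (fun q => ENNReal.ofReal (g q)) p := by
        apply lintegral_mono
        intro p
        dsimp only
        by_cases hp : p ∈ A
        · rw [Set.indicator_of_mem hp]
          have hpS : p ∈ S := by
            obtain ⟨hy, _⟩ := hAsub hp
            exact ⟨hy, Set.mem_univ _⟩
          rw [Set.indicator_of_mem hpS]
          have : K * ENNReal.ofReal (g p) = ENNReal.ofReal (((4 / c) * M + 4 / c) * g p) := by
            rw [ENNReal.ofReal_mul (add_nonneg hKM hK0.le), ENNReal.ofReal_add hKM hK0.le]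
          rw [this]
          exact ENNReal.ofReal_le_ofReal (key p hp)
        · rw [Set.indicator_of_notMem hp]
          exact zero_le
    _ = K * ∫⁻ p, S.indicator (fun q => ENNReal.ofReal (g q)) p :=
        lintegral_const_mul' _ _ hKne
    _ = K * ∫⁻ p in S, ENNReal.ofReal (g p) := by rw [lintegral_indicator hS _]
end
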